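/- arXiv:1706.01949 — 10 statements merged into one kernel-verified Lean document; each statement's English description precedes it below -/
import Mathlib

section
/- Let Q ∈ ℝ^{P×P} be symmetric, r ∈ ℝ^P, F ∈ ℝ^{m×P}, g ∈ ℝ^m, and let ℒ ⊆ {1,…,P}. Assume that every ξ ∈ ℝ^P with ξ ≥ 0 and Fξ = g satisfies ξ_ℓ ≤ 1 for all ℓ ∈ ℒ. Then the optimal value of the mixed-binary quadratic program sup{ ξᵀQξ + rᵀξ : ξ ∈ ℝ^P, ξ ≥ 0, Fξ = g, ξ_ℓ ∈ {0,1} for all ℓ ∈ ℒ } equals the optimal value of the completely positive program sup{ tr(ΩQ) + rᵀξ : ξ ∈ ℝ^P, ξ ≥ 0, Ω ∈ ℝ^{P×P} symmetric positive semidefinite, Fξ = g, diag(FΩFᵀ) = g∘g, ξ_ℓ = Ω_{ℓℓ} for all ℓ ∈ ℒ, and the (P+1)×(P+1) block matrix [[Ω, ξ],[ξᵀ, 1]] is completely positive }, where both suprema are taken in the extended reals (so they agree also when both problems are infeasible or unbounded). -/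
open Matrix

/-- A symmetric matrix is completely positive if it factors as `B * Bᵀ` with `B` entrywise
nonnegative. -/
def IsCompletelyPositive {n : Type*} [Fintype n] (M : Matrix n n ℝ) : Prop :=
  ∃ (m : ℕ) (B : Matrix n (Fin m) ℝ), (∀ i j, 0 ≤ B i j) ∧ M = B * Bᵀ

private lemma vecMulVec_trace_aux {P : ℕ} (ξ : Fin P → ℝ) (Q : Matrix (Fin P) (Fin P) ℝ) :
    (vecMulVec ξ ξ * Q).trace = ξ ⬝ᵥ Q.mulVec ξ := by
  simp only [Matrix.trace, Matrix.diag, Matrix.mul_apply, vecMulVec_apply, dotProduct,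
    Matrix.mulVec, dotProduct]
  rw [Finset.sum_comm]
  refine Finset.sum_congr rfl fun i _ => ?_
  rw [Finset.mul_sum]
  refine Finset.sum_congr rfl fun j _ => ?_
  ring

private lemma vecMulVec_posSemidef_aux {P : ℕ} (ξ : Fin P → ℝ) :
    (vecMulVec ξ ξ).PosSemidef := by
  refine Matrix.PosSemidef.of_dotProduct_mulVec_nonneg ?_ ?_
  · ext i j; simp [vecMulVec_apply, mul_comm]
  · intro x
    have : star x ⬝ᵥ (vecMulVec ξ ξ).mulVec x = (ξ ⬝ᵥ x) * (ξ ⬝ᵥ x) := by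
      simp only [star_trivial, dotProduct, Matrix.mulVec, vecMulVec_apply, dotProduct,
        Finset.mul_sum, Finset.sum_mul]
      rw [Finset.sum_comm]
      exact Finset.sum_congr rfl fun i _ => Finset.sum_congr rfl fun j _ => by ring
    rw [this]
    exact mul_self_nonneg _

private lemma quad_entry_aux {P m : ℕ} (ξ : Fin P → ℝ) (F : Matrix (Fin m) (Fin P) ℝ)
    (j j' : Fin m) :
    (F * vecMulVec ξ ξ * Fᵀ) j j' = F.mulVec ξ j * F.mulVec ξ j' := by
  simp only [Matrix.mul_apply, vecMulVec_apply, transpose_apply, Matrix.mulVec, dotProduct,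
    Finset.sum_mul, Finset.mul_sum]
  exact Finset.sum_congr rfl fun i _ => Finset.sum_congr rfl fun i' _ => by ring

/-- Burer's theorem: the mixed-binary quadratic program equals its completely positive
reformulation (values taken in the extended reals). -/
theorem burer_completely_positive_reformulation
    (P m : ℕ) (Q : Matrix (Fin P) (Fin P) ℝ) (hQ : Qᵀ = Q)
    (r : Fin P → ℝ) (F : Matrix (Fin m) (Fin P) ℝ) (g : Fin m → ℝ)
    (L : Set (Fin P))
    (hbound : ∀ ξ : Fin P → ℝ, (∀ i, 0 ≤ ξ i) → F.mulVec ξ = g → ∀ ℓ ∈ L, ξ ℓ ≤ 1) :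
    sSup {z : EReal | ∃ ξ : Fin P → ℝ, (∀ i, 0 ≤ ξ i) ∧ F.mulVec ξ = g ∧
        (∀ ℓ ∈ L, ξ ℓ = 0 ∨ ξ ℓ = 1) ∧
        z = ((ξ ⬝ᵥ Q.mulVec ξ + r ⬝ᵥ ξ : ℝ) : EReal)} =
    sSup {z : EReal | ∃ (ξ : Fin P → ℝ) (Ω : Matrix (Fin P) (Fin P) ℝ),
        (∀ i, 0 ≤ ξ i) ∧ Ω.PosSemidef ∧ F.mulVec ξ = g ∧
        (∀ j, (F * Ω * Fᵀ) j j = g j * g j) ∧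
        (∀ ℓ ∈ L, ξ ℓ = Ω ℓ ℓ) ∧
        IsCompletelyPositive
          (fromBlocks Ω (of fun i (_ : Unit) => ξ i) (of fun (_ : Unit) j => ξ j) 1) ∧
        z = (((Ω * Q).trace + r ⬝ᵥ ξ : ℝ) : EReal)} := by
  apply le_antisymm
  · -- easy direction: every MBQP feasible point gives a CP feasible point
    refine sSup_le_sSup ?_
    rintro z ⟨ξ, hξ0, hFg, hbinξ, rfl⟩
    refine ⟨ξ, vecMulVec ξ ξ, hξ0, vecMulVec_posSemidef_aux ξ, hFg, ?_, ?_, ?_, ?_⟩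
    · intro j; rw [quad_entry_aux, hFg]
    · intro ℓ hℓ
      rw [vecMulVec_apply]
      rcases hbinξ ℓ hℓ with h | h <;> rw [h] <;> ring
    · refine ⟨1, Matrix.of fun i _ => Sum.elim ξ (fun _ => 1) i, ?_, ?_⟩
      · rintro (i | i) j
        · exact hξ0 i
        · exact zero_le_one
      · ext i j
        rcases i with i | i <;> rcases j with j | j <;>
          simp [Matrix.mul_apply, vecMulVec_apply, Fin.sum_univ_one, Matrix.one_apply]
    · rw [vecMulVec_trace_aux]
  · -- hard direction (Burer)
    refine sSup_le ?_
    rintro z ⟨ξ, Ω, hξnn, hΩpsd, hFg, hdiag, hbind, ⟨n, B, hB0, hBB⟩, rfl⟩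
    set b : Fin n → Fin P → ℝ := fun k i => B (Sum.inl i) k with hbdef
    set β : Fin n → ℝ := fun k => B (Sum.inr ()) k with hβdef
    have hβ0 : ∀ k, 0 ≤ β k := fun k => hB0 _ k
    have hb0 : ∀ k i, 0 ≤ b k i := fun k i => hB0 _ k
    have hΩe : ∀ i j, Ω i j = ∑ k, b k i * b k j := by
      intro i j
      have h := congrFun (congrFun hBB (Sum.inl i)) (Sum.inl j)
      simpa [Matrix.mul_apply, hbdef] using h
    have hξe : ∀ i, ξ i = ∑ k, b k i * β k := by
      intro i
      have h := congrFun (congrFun hBB (Sum.inl i)) (Sum.inr ())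
      simpa [Matrix.mul_apply, hbdef, hβdef] using h
    have hβ1 : ∑ k, β k * β k = 1 := by
      have h := congrFun (congrFun hBB (Sum.inr ())) (Sum.inr ())
      simp only [Matrix.mul_apply, transpose_apply, fromBlocks_apply₂₂,
        Matrix.one_apply_eq] at h
      simpa [hβdef] using h.symm
    -- all columns satisfy F bₖ = g βₖ (Cauchy-Schwarz equality argument)
    have hFb : ∀ k j, (∑ i, F j i * b k i) = g j * β k := by
      intro k0 j
      have hsum1 : ∑ k, β k * (∑ i, F j i * b k i) = g j := by
        have hgj : ∑ i, F j i * ξ i = g j := congrFun hFg j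
        calc ∑ k, β k * (∑ i, F j i * b k i)
            = ∑ k, ∑ i, β k * (F j i * b k i) := by
              exact Finset.sum_congr rfl fun k _ => Finset.mul_sum _ _ _
          _ = ∑ i, ∑ k, β k * (F j i * b k i) := Finset.sum_comm
          _ = ∑ i, F j i * ξ i := by
              refine Finset.sum_congr rfl fun i _ => ?_
              rw [hξe i, Finset.mul_sum]
              exact (Finset.sum_congr rfl fun k _ => by ring).symm.symm
          _ = g j := hgj
      have hsum2 : ∑ k, (∑ i, F j i * b k i) * (∑ i, F j i * b k i) = g j * g j := by
        have key : (F * Ω * Fᵀ) j j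
            = ∑ k, (∑ i, F j i * b k i) * (∑ i, F j i * b k i) := by
          simp only [Matrix.mul_apply, transpose_apply]
          calc ∑ a, (∑ i, F j i * Ω i a) * F j a
              = ∑ a, ∑ i, ∑ k, F j i * b k i * (F j a * b k a) := by
                refine Finset.sum_congr rfl fun a _ => ?_
                rw [Finset.sum_mul]
                refine Finset.sum_congr rfl fun i _ => ?_
                rw [hΩe i a, Finset.mul_sum, Finset.sum_mul]
                exact Finset.sum_congr rfl fun k _ => by ring
            _ = ∑ a, ∑ k, ∑ i, F j i * b k i * (F j a * b k a) :=
                Finset.sum_congr rfl fun a _ => Finset.sum_comm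
            _ = ∑ k, ∑ a, ∑ i, F j i * b k i * (F j a * b k a) := Finset.sum_comm
            _ = ∑ k, (∑ i, F j i * b k i) * (∑ i, F j i * b k i) := by
                refine Finset.sum_congr rfl fun k _ => ?_
                rw [Finset.sum_mul]
                refine Finset.sum_congr rfl fun a _ => ?_
                rw [Finset.mul_sum]
                exact Finset.sum_congr rfl fun i _ => by ring
        rw [← key, hdiag j]
      have hzero : ∑ k, ((∑ i, F j i * b k i) - g j * β k)
          * ((∑ i, F j i * b k i) - g j * β k) = 0 := by
        have expand : ∑ k, ((∑ i, F j i * b k i) - g j * β k)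
            * ((∑ i, F j i * b k i) - g j * β k)
            = (∑ k, (∑ i, F j i * b k i) * (∑ i, F j i * b k i))
              - 2 * g j * (∑ k, β k * (∑ i, F j i * b k i))
              + g j * g j * (∑ k, β k * β k) := by
          rw [Finset.mul_sum, Finset.mul_sum, ← Finset.sum_sub_distrib,
            ← Finset.sum_add_distrib]
          exact Finset.sum_congr rfl fun k _ => by ring
        rw [expand, hsum1, hsum2, hβ1]; ring
      have h := (Finset.sum_eq_zero_iff_of_nonneg
        (fun k _ => mul_self_nonneg _)).1 hzero k0 (Finset.mem_univ k0)
      exact sub_eq_zero.mp (mul_self_eq_zero.mp h)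
    have hFbvec : ∀ k, β k = 0 → ∀ j0, (∑ i, F j0 i * b k i) = 0 := by
      intro k hk j0; rw [hFb k j0, hk, mul_zero]
    have hex : ∃ k0, 0 < β k0 := by
      by_contra hc
      push_neg at hc
      have hz : ∀ k, β k = 0 := fun k => le_antisymm (hc k) (hβ0 k)
      rw [Finset.sum_eq_zero (fun k _ => by rw [hz k, mul_zero])] at hβ1
      exact zero_ne_one hβ1
    -- scaled columns are feasible
    have hfeas : ∀ k, 0 < β k → F.mulVec (fun i => (β k)⁻¹ * b k i) = g := by
      intro k hk
      funext j0
      show ∑ i, F j0 i * ((β k)⁻¹ * b k i) = g j0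
      calc ∑ i, F j0 i * ((β k)⁻¹ * b k i)
          = (β k)⁻¹ * ∑ i, F j0 i * b k i := by
            rw [Finset.mul_sum]; exact Finset.sum_congr rfl fun i _ => by ring
        _ = g j0 := by
            rw [hFb k j0, mul_comm (g j0), ← mul_assoc, inv_mul_cancel₀ hk.ne', one_mul]
    -- columns with βₖ = 0 vanish on L
    have hzeroL : ∀ k, β k = 0 → ∀ ℓ ∈ L, b k ℓ = 0 := by
      intro k hk ℓ hℓ
      obtain ⟨k0, hk0⟩ := hex
      by_contra hne
      have hpos : 0 < b k ℓ := lt_of_le_of_ne (hb0 k ℓ) (Ne.symm hne)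
      set t : ℝ := max 0 ((2 - (β k0)⁻¹ * b k0 ℓ) / b k ℓ) with htdef
      have ht0 : 0 ≤ t := le_max_left _ _
      have hfeas' : F.mulVec (fun i => (β k0)⁻¹ * b k0 i + t * b k i) = g := by
        funext j0
        show ∑ i, F j0 i * ((β k0)⁻¹ * b k0 i + t * b k i) = g j0
        have hsplit : ∑ i, F j0 i * ((β k0)⁻¹ * b k0 i + t * b k i)
            = (∑ i, F j0 i * ((β k0)⁻¹ * b k0 i)) + t * ∑ i, F j0 i * b k i := by
          rw [Finset.mul_sum, ← Finset.sum_add_distrib]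
          exact Finset.sum_congr rfl fun i _ => by ring
        rw [hsplit, hFbvec k hk j0, mul_zero, add_zero]
        exact congrFun (hfeas k0 hk0) j0
      have hnn : ∀ i, 0 ≤ (β k0)⁻¹ * b k0 i + t * b k i := fun i =>
        add_nonneg (mul_nonneg (inv_nonneg.2 (hβ0 k0)) (hb0 k0 i))
          (mul_nonneg ht0 (hb0 k i))
      have hle := hbound _ hnn hfeas' ℓ hℓ
      have htb : 2 - (β k0)⁻¹ * b k0 ℓ ≤ t * b k ℓ := by
        have h1 : (2 - (β k0)⁻¹ * b k0 ℓ) / b k ℓ ≤ t := le_max_right _ _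
        calc 2 - (β k0)⁻¹ * b k0 ℓ
            = ((2 - (β k0)⁻¹ * b k0 ℓ) / b k ℓ) * b k ℓ :=
              (div_mul_cancel₀ _ hne).symm
          _ ≤ t * b k ℓ := mul_le_mul_of_nonneg_right h1 (le_of_lt hpos)
      linarith
    have hleβ : ∀ k, ∀ ℓ ∈ L, b k ℓ ≤ β k := by
      intro k ℓ hℓ
      rcases eq_or_lt_of_le (hβ0 k) with h | h
      · rw [hzeroL k h.symm ℓ hℓ, ← h]
      · have hle := hbound _ (fun i => mul_nonneg (inv_nonneg.2 (hβ0 k)) (hb0 k i))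
          (hfeas k h) ℓ hℓ
        calc b k ℓ = β k * ((β k)⁻¹ * b k ℓ) := by
              rw [← mul_assoc, mul_inv_cancel₀ h.ne', one_mul]
          _ ≤ β k * 1 := mul_le_mul_of_nonneg_left hle (hβ0 k)
          _ = β k := mul_one _
    have hbinK : ∀ ℓ ∈ L, ∀ k, b k ℓ * (β k - b k ℓ) = 0 := by
      intro ℓ hℓ
      have hsum0 : ∑ k, b k ℓ * (β k - b k ℓ) = 0 := by
        have h1 := hbind ℓ hℓ
        rw [hξe ℓ, hΩe ℓ ℓ] at h1
        calc ∑ k, b k ℓ * (β k - b k ℓ)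
            = (∑ k, b k ℓ * β k) - ∑ k, b k ℓ * b k ℓ := by
              rw [← Finset.sum_sub_distrib]
              exact Finset.sum_congr rfl fun k _ => by ring
          _ = 0 := by rw [h1, sub_self]
      intro k
      exact (Finset.sum_eq_zero_iff_of_nonneg (fun k _ => mul_nonneg (hb0 k ℓ)
        (sub_nonneg.2 (hleβ k ℓ hℓ)))).1 hsum0 k (Finset.mem_univ k)
    have hbinscaled : ∀ k, 0 < β k → ∀ ℓ ∈ L,
        (β k)⁻¹ * b k ℓ = 0 ∨ (β k)⁻¹ * b k ℓ = 1 := by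
      intro k hk ℓ hℓ
      rcases mul_eq_zero.1 (hbinK ℓ hℓ k) with h | h
      · left; rw [h, mul_zero]
      · right; rw [sub_eq_zero] at h; rw [← h, inv_mul_cancel₀ hk.ne']
    -- value decomposition
    have hval : (Ω * Q).trace + r ⬝ᵥ ξ
        = ∑ k, (b k ⬝ᵥ Q.mulVec (b k) + β k * (r ⬝ᵥ b k)) := by
      have ht : (Ω * Q).trace = ∑ k, b k ⬝ᵥ Q.mulVec (b k) := by
        simp only [Matrix.trace, Matrix.diag, Matrix.mul_apply]
        calc ∑ i, ∑ j, Ω i j * Q j i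
            = ∑ i, ∑ j, ∑ k, b k i * b k j * Q j i := by
              refine Finset.sum_congr rfl fun i _ => Finset.sum_congr rfl fun j _ => ?_
              rw [hΩe i j, Finset.sum_mul]
          _ = ∑ i, ∑ k, ∑ j, b k i * b k j * Q j i :=
              Finset.sum_congr rfl fun i _ => Finset.sum_comm
          _ = ∑ k, ∑ i, ∑ j, b k i * b k j * Q j i := Finset.sum_comm
          _ = ∑ k, b k ⬝ᵥ Q.mulVec (b k) := by
              refine Finset.sum_congr rfl fun k _ => ?_
              simp only [dotProduct, Matrix.mulVec, Finset.mul_sum]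
              rw [Finset.sum_comm]
              exact Finset.sum_congr rfl fun i _ => Finset.sum_congr rfl fun j _ => by ring
      have hr : r ⬝ᵥ ξ = ∑ k, β k * (r ⬝ᵥ b k) := by
        simp only [dotProduct]
        calc ∑ i, r i * ξ i
            = ∑ i, ∑ k, r i * (b k i * β k) := by
              refine Finset.sum_congr rfl fun i _ => ?_
              rw [hξe i, Finset.mul_sum]
          _ = ∑ k, ∑ i, r i * (b k i * β k) := Finset.sum_comm
          _ = ∑ k, β k * ∑ i, r i * b k i := by
              refine Finset.sum_congr rfl fun k _ => ?_
              rw [Finset.mul_sum]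
              exact Finset.sum_congr rfl fun i _ => by ring
      rw [ht, hr, ← Finset.sum_add_distrib]
    by_cases hcase : ∃ k, β k = 0 ∧ 0 < b k ⬝ᵥ Q.mulVec (b k)
    · -- unbounded case: LHS sup is ⊤
      obtain ⟨kd, hkd0, hkdQ⟩ := hcase
      obtain ⟨k0, hk0⟩ := hex
      have htop : sSup {z : EReal | ∃ ξ : Fin P → ℝ, (∀ i, 0 ≤ ξ i) ∧ F.mulVec ξ = g ∧
          (∀ ℓ ∈ L, ξ ℓ = 0 ∨ ξ ℓ = 1) ∧
          z = ((ξ ⬝ᵥ Q.mulVec ξ + r ⬝ᵥ ξ : ℝ) : EReal)} = ⊤ := by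
        rw [sSup_eq_top]
        intro x hx
        obtain ⟨M, hM, -⟩ := EReal.exists_between_coe_real hx
        set ξ0 : Fin P → ℝ := fun i => (β k0)⁻¹ * b k0 i with hξ0def
        set d : Fin P → ℝ := b kd with hddef
        set A : ℝ := ξ0 ⬝ᵥ Q.mulVec ξ0 + r ⬝ᵥ ξ0 with hAdef
        set Bc : ℝ := ξ0 ⬝ᵥ Q.mulVec d + d ⬝ᵥ Q.mulVec ξ0 + r ⬝ᵥ d with hBcdef
        set C : ℝ := d ⬝ᵥ Q.mulVec d with hCdef
        have hC : 0 < C := hkdQ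
        set t : ℝ := max 1 ((|A| + |Bc| + |M| + 1) / C) with htdef
        have ht1 : (1 : ℝ) ≤ t := le_max_left _ _
        have ht0 : 0 ≤ t := by linarith
        have htC : |A| + |Bc| + |M| + 1 ≤ C * t := by
          have h := le_max_right 1 ((|A| + |Bc| + |M| + 1) / C)
          rw [div_le_iff₀ hC] at h
          calc |A| + |Bc| + |M| + 1 ≤ t * C := h.trans (mul_le_mul_of_nonneg_right
            (le_refl t) (le_of_lt hC))
            _ = C * t := mul_comm _ _
        set ξt : Fin P → ℝ := ξ0 + t • d with hξtdef
        have hξtnn : ∀ i, 0 ≤ ξt i := fun i => by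
          simp only [hξtdef, Pi.add_apply, Pi.smul_apply, smul_eq_mul]
          exact add_nonneg (mul_nonneg (inv_nonneg.2 (hβ0 k0)) (hb0 k0 i))
            (mul_nonneg ht0 (hb0 kd i))
        have hξtF : F.mulVec ξt = g := by
          funext j0
          show ∑ i, F j0 i * ξt i = g j0
          have hsplit : ∑ i, F j0 i * ξt i
              = (∑ i, F j0 i * ξ0 i) + t * ∑ i, F j0 i * b kd i := by
            rw [Finset.mul_sum, ← Finset.sum_add_distrib]
            refine Finset.sum_congr rfl fun i _ => ?_
            simp only [hξtdef, Pi.add_apply, Pi.smul_apply, smul_eq_mul, hddef]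
            ring
          rw [hsplit, hFbvec kd hkd0 j0, mul_zero, add_zero]
          exact congrFun (hfeas k0 hk0) j0
        have hξtbin : ∀ ℓ ∈ L, ξt ℓ = 0 ∨ ξt ℓ = 1 := by
          intro ℓ hℓ
          have hd0 : d ℓ = 0 := hzeroL kd hkd0 ℓ hℓ
          have heq : ξt ℓ = ξ0 ℓ := by
            simp [hξtdef, Pi.add_apply, Pi.smul_apply, hd0]
          rw [heq]
          exact hbinscaled k0 hk0 ℓ hℓ
        have hvalt : ξt ⬝ᵥ Q.mulVec ξt + r ⬝ᵥ ξt = A + Bc * t + C * t ^ 2 := by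
          rw [hξtdef]
          simp only [Matrix.mulVec_add, Matrix.mulVec_smul, dotProduct_add, add_dotProduct,
            dotProduct_smul, smul_dotProduct, smul_eq_mul, hAdef, hBcdef, hCdef]
          ring
        refine ⟨((ξt ⬝ᵥ Q.mulVec ξt + r ⬝ᵥ ξt : ℝ) : EReal),
          ⟨ξt, hξtnn, hξtF, hξtbin, rfl⟩, ?_⟩
        have hMlt : M < ξt ⬝ᵥ Q.mulVec ξt + r ⬝ᵥ ξt := by
          rw [hvalt]
          nlinarith [le_abs_self A, neg_abs_le A, neg_abs_le Bc, le_abs_self M,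
            neg_abs_le M, abs_nonneg A, abs_nonneg Bc, abs_nonneg M]
        exact hM.trans (by exact_mod_cast hMlt)
      rw [htop]
      exact le_top
    · -- bounded case: value is a convex combination of feasible binary values
      push_neg at hcase
      have hterm : ∀ k, b k ⬝ᵥ Q.mulVec (b k) + β k * (r ⬝ᵥ b k)
          ≤ β k * β k * (((β k)⁻¹ • b k) ⬝ᵥ Q.mulVec ((β k)⁻¹ • b k)
              + r ⬝ᵥ ((β k)⁻¹ • b k)) := by
        intro k
        rcases eq_or_lt_of_le (hβ0 k) with h | h
        · have hb0k := hcase k h.symm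
          rw [← h]
          simp only [zero_mul, mul_zero, add_zero]
          linarith
        · have hbk : b k = β k • ((β k)⁻¹ • b k) := by
            rw [smul_smul, mul_inv_cancel₀ h.ne', one_smul]
          have h1 : b k ⬝ᵥ Q.mulVec (b k)
              = β k * (β k * (((β k)⁻¹ • b k) ⬝ᵥ Q.mulVec ((β k)⁻¹ • b k))) := by
            conv_lhs => rw [hbk]
            rw [smul_dotProduct, Matrix.mulVec_smul, dotProduct_smul, smul_eq_mul, smul_eq_mul]
          have h2 : r ⬝ᵥ b k = β k * (r ⬝ᵥ ((β k)⁻¹ • b k)) := by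
            conv_lhs => rw [hbk]
            rw [dotProduct_smul, smul_eq_mul]
          rw [h1, h2]
          exact le_of_eq (by ring)
      have hzle : (Ω * Q).trace + r ⬝ᵥ ξ
          ≤ ∑ k, β k * β k * (((β k)⁻¹ • b k) ⬝ᵥ Q.mulVec ((β k)⁻¹ • b k)
              + r ⬝ᵥ ((β k)⁻¹ • b k)) := by
        rw [hval]
        exact Finset.sum_le_sum fun k _ => hterm k
      set v : Fin n → ℝ := fun k => ((β k)⁻¹ • b k) ⬝ᵥ Q.mulVec ((β k)⁻¹ • b k)
          + r ⬝ᵥ ((β k)⁻¹ • b k) with hvdef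
      set K : Finset (Fin n) := Finset.univ.filter (fun k => 0 < β k) with hKdef
      have hKzero : ∀ k ∈ Finset.univ, k ∉ K → β k * β k * v k = 0 := by
        intro k _ hk
        have hknot : ¬ 0 < β k := by simpa [hKdef] using hk
        have hkz : β k = 0 := le_antisymm (not_lt.1 hknot) (hβ0 k)
        rw [hkz]; ring
      have hKne : K.Nonempty := by
        obtain ⟨k0, hk0⟩ := hex
        exact ⟨k0, Finset.mem_filter.2 ⟨Finset.mem_univ _, hk0⟩⟩
      obtain ⟨ks, hks, hmax⟩ := K.exists_max_image v hKne
      have hksb : 0 < β ks := (Finset.mem_filter.1 hks).2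
      have hsumK : ∑ k ∈ K, β k * β k = 1 := by
        rw [Finset.sum_subset (Finset.subset_univ K) (fun k hk1 hk2 => by
          have hknot : ¬ 0 < β k := by simpa [hKdef] using hk2
          have hkz : β k = 0 := le_antisymm (not_lt.1 hknot) (hβ0 k)
          rw [hkz, mul_zero])]
        exact hβ1
      have hvk : ∑ k, β k * β k * v k ≤ v ks := by
        calc ∑ k, β k * β k * v k
            = ∑ k ∈ K, β k * β k * v k :=
              (Finset.sum_subset (Finset.subset_univ K) hKzero).symm
          _ ≤ ∑ k ∈ K, β k * β k * v ks :=
              Finset.sum_le_sum fun k hk =>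
                mul_le_mul_of_nonneg_left (hmax k hk) (mul_self_nonneg _)
          _ = (∑ k ∈ K, β k * β k) * v ks := by rw [Finset.sum_mul]
          _ = v ks := by rw [hsumK, one_mul]
      have hmem : ((v ks : ℝ) : EReal) ∈ {z : EReal | ∃ ξ : Fin P → ℝ, (∀ i, 0 ≤ ξ i) ∧
          F.mulVec ξ = g ∧ (∀ ℓ ∈ L, ξ ℓ = 0 ∨ ξ ℓ = 1) ∧
          z = ((ξ ⬝ᵥ Q.mulVec ξ + r ⬝ᵥ ξ : ℝ) : EReal)} := by
        refine ⟨(β ks)⁻¹ • b ks, ?_, ?_, ?_, ?_⟩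
        · intro i
          exact mul_nonneg (inv_nonneg.2 (hβ0 ks)) (hb0 ks i)
        · exact hfeas ks hksb
        · intro ℓ hℓ
          exact hbinscaled ks hksb ℓ hℓ
        · rw [hvdef]
      calc (((Ω * Q).trace + r ⬝ᵥ ξ : ℝ) : EReal) ≤ ((v ks : ℝ) : EReal) := by
            exact_mod_cast le_trans hzle hvk
        _ ≤ _ := le_sSup hmem
end

section
/- Let S ∈ ℝ^{J×K}, t ∈ ℝ^J, A ∈ ℝ^{M×K}, b ∈ ℝ^K, L ≤ K, and let τ ∈ ℝ, ψ, φ ∈ ℝ^J, γ ∈ ℝ^L. Let γ̃ ∈ ℝ^K be the vector with γ̃_ℓ = γ_ℓ for ℓ ∈ {1,…,L} and γ̃_ℓ = 0 otherwise. If the (K+1)×(K+1) block matrix [[Sᵀ diag(φ) S − AᵀA − diag(γ̃), ½(Sᵀψ − b + γ̃)], [½(Sᵀψ − b + γ̃)ᵀ, τ]] is copositive, then every ξ ∈ ℝ^K with ξ ≥ 0, Sξ = t, and ξ_ℓ ∈ {0,1} for all ℓ ∈ {1,…,L} satisfies ‖Aξ‖² + bᵀξ ≤ tᵀψ + (t∘t)ᵀφ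 + τ. -/
open Matrix

/-- A symmetric matrix `M` is copositive if `ξᵀ M ξ ≥ 0` for all entrywise nonnegative `ξ`. -/
def IsCopositive {n : Type*} [Fintype n] (M : Matrix n n ℝ) : Prop :=
  ∀ ξ : n → ℝ, (∀ i, 0 ≤ ξ i) → 0 ≤ ξ ⬝ᵥ M.mulVec ξ

/-- Weak duality: a copositive-feasible dual solution upper-bounds the mixed-binary
quadratic objective. -/
theorem copositive_weak_duality
    (J K M L : ℕ) (hL : L ≤ K)
    (S : Matrix (Fin J) (Fin K) ℝ) (t : Fin J → ℝ)
    (A : Matrix (Fin M) (Fin K) ℝ) (b : Fin K → ℝ)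
    (τ : ℝ) (ψ φ : Fin J → ℝ) (γ : Fin L → ℝ)
    (γt : Fin K → ℝ)
    (hγt : ∀ ℓ : Fin K, γt ℓ = if h : (ℓ : ℕ) < L then γ ⟨ℓ, h⟩ else 0)
    (hcop : IsCopositive
      (fromBlocks
        (Sᵀ * diagonal φ * S - Aᵀ * A - diagonal γt)
        (of fun i (_ : Unit) => (Sᵀ.mulVec ψ i - b i + γt i) / 2)
        (of fun (_ : Unit) j => (Sᵀ.mulVec ψ j - b j + γt j) / 2)
        (of fun (_ : Unit) (_ : Unit) => τ))) :
    ∀ ξ : Fin K → ℝ, (∀ i, 0 ≤ ξ i) → S.mulVec ξ = t →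
      (∀ ℓ : Fin K, (ℓ : ℕ) < L → ξ ℓ = 0 ∨ ξ ℓ = 1) →
      A.mulVec ξ ⬝ᵥ A.mulVec ξ + b ⬝ᵥ ξ ≤
        t ⬝ᵥ ψ + (fun j => t j * t j) ⬝ᵥ φ + τ := by
  intro ξ hξ hSξ hbin
  have hpos : ∀ i : Fin K ⊕ Unit, 0 ≤ Sum.elim ξ (fun _ => (1:ℝ)) i := by
    rintro (i | i)
    · exact hξ i
    · exact zero_le_one
  have key := hcop _ hpos
  rw [fromBlocks_mulVec, sumElim_dotProduct_sumElim] at key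
  simp only [Sum.elim_comp_inl, Sum.elim_comp_inr] at key
  have h5 : (ξ ⬝ᵥ (of fun i (_ : Unit) => ((Sᵀ *ᵥ ψ) i - b i + γt i) / 2) *ᵥ
      fun _ => (1:ℝ)) = (Sᵀ *ᵥ ψ ⬝ᵥ ξ - b ⬝ᵥ ξ + γt ⬝ᵥ ξ) / 2 := by
    simp only [mulVec, dotProduct, of_apply, Finset.univ_unique, Finset.sum_singleton, mul_one]
    rw [eq_div_iff (by norm_num : (2:ℝ) ≠ 0), Finset.sum_mul, ← Finset.sum_sub_distrib,
      ← Finset.sum_add_distrib]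
    refine Finset.sum_congr rfl fun i _ => by ring
  have h6 : ((fun _ : Unit => (1:ℝ)) ⬝ᵥ
      ((of fun (_ : Unit) j => ((Sᵀ *ᵥ ψ) j - b j + γt j) / 2) *ᵥ ξ
        + (of fun (_ : Unit) (_ : Unit) => τ) *ᵥ fun _ => (1:ℝ))) =
      (Sᵀ *ᵥ ψ ⬝ᵥ ξ - b ⬝ᵥ ξ + γt ⬝ᵥ ξ) / 2 + τ := by
    simp only [mulVec, dotProduct, of_apply, Finset.univ_unique, Finset.sum_singleton,
      Pi.add_apply, mul_one, one_mul]
    congr 1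
    rw [eq_div_iff (by norm_num : (2:ℝ) ≠ 0), Finset.sum_mul, ← Finset.sum_sub_distrib,
      ← Finset.sum_add_distrib]
    refine Finset.sum_congr rfl fun i _ => by ring
  rw [dotProduct_add, h5, h6] at key
  have h1 : ξ ⬝ᵥ (Sᵀ * diagonal φ * S) *ᵥ ξ = (fun j => t j * t j) ⬝ᵥ φ := by
    rw [← mulVec_mulVec, ← mulVec_mulVec, dotProduct_mulVec, vecMul_transpose, hSξ]
    simp only [mulVec_diagonal, dotProduct]
    exact Finset.sum_congr rfl fun j _ => by ring
  have h2 : ξ ⬝ᵥ (Aᵀ * A) *ᵥ ξ = A *ᵥ ξ ⬝ᵥ A *ᵥ ξ := by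
    rw [← mulVec_mulVec, dotProduct_mulVec, vecMul_transpose]
  have h3 : ξ ⬝ᵥ (diagonal γt) *ᵥ ξ = γt ⬝ᵥ ξ := by
    simp only [dotProduct, mulVec_diagonal]
    refine Finset.sum_congr rfl fun i _ => ?_
    by_cases h : (i : ℕ) < L
    · rcases hbin i h with h0 | h1
      · rw [h0]; ring
      · rw [h1]; ring
    · rw [hγt i, dif_neg h]; ring
  have h4 : Sᵀ *ᵥ ψ ⬝ᵥ ξ = t ⬝ᵥ ψ := by
    rw [← vecMul_transpose, transpose_transpose, ← dotProduct_mulVec, hSξ, dotProduct_comm]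
  rw [sub_mulVec, sub_mulVec, dotProduct_sub, dotProduct_sub, h1, h2, h3, h4] at key
  linarith
end

section
/- Let S ∈ ℝ^{J×K} and t ∈ ℝ^J, and suppose the polyhedron { ξ ∈ ℝ^K : ξ ≥ 0, Sξ = t } is nonempty and bounded. Then the matrix SᵀS is strictly copositive, i.e., ξᵀSᵀSξ > 0 for every ξ ∈ ℝ^K with ξ ≥ 0 and ξ ≠ 0. -/
open Matrix

/-- If the polyhedron `{ξ ≥ 0 : Sξ = t}` is nonempty and bounded, then `SᵀS` is strictly
copositive. -/
theorem StS_strictly_copositive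
    (J K : ℕ) (S : Matrix (Fin J) (Fin K) ℝ) (t : Fin J → ℝ)
    (hne : {ξ : Fin K → ℝ | (∀ i, 0 ≤ ξ i) ∧ S.mulVec ξ = t}.Nonempty)
    (hbdd : Bornology.IsBounded {ξ : Fin K → ℝ | (∀ i, 0 ≤ ξ i) ∧ S.mulVec ξ = t}) :
    ∀ ξ : Fin K → ℝ, (∀ i, 0 ≤ ξ i) → ξ ≠ 0 →
      0 < ξ ⬝ᵥ (Sᵀ * S).mulVec ξ := by
  intro ξ hξ hξ0
  have key : ξ ⬝ᵥ (Sᵀ * S).mulVec ξ = (S.mulVec ξ) ⬝ᵥ (S.mulVec ξ) := by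
    rw [← Matrix.mulVec_mulVec, Matrix.dotProduct_mulVec, Matrix.vecMul_transpose]
  rw [key]
  rcases eq_or_lt_of_le (Finset.sum_nonneg fun i _ => mul_self_nonneg (S.mulVec ξ i)) with h | h
  · exfalso
    have hSξ : S.mulVec ξ = 0 := by
      have := (dotProduct_self_eq_zero (v := S.mulVec ξ)).mp h.symm
      exact this
    -- get a coordinate where ξ is positive
    obtain ⟨i0, hi0⟩ : ∃ i0, ξ i0 ≠ 0 := Function.ne_iff.mp hξ0
    have hi0pos : 0 < ξ i0 := lt_of_le_of_ne (hξ i0) (Ne.symm hi0)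
    obtain ⟨x, hx0, hxS⟩ := hne
    obtain ⟨C, hC⟩ := hbdd.exists_norm_le
    set c : ℝ := (|C| + 1) / ξ i0 with hc
    have hcpos : 0 < c := div_pos (by positivity) hi0pos
    have hmem : x + c • ξ ∈ {ξ : Fin K → ℝ | (∀ i, 0 ≤ ξ i) ∧ S.mulVec ξ = t} := by
      constructor
      · intro i
        have : 0 ≤ c * ξ i := mul_nonneg hcpos.le (hξ i)
        simpa using add_nonneg (hx0 i) this
      · rw [Matrix.mulVec_add, Matrix.mulVec_smul, hSξ, hxS]
        simp
    have h1 : ‖x + c • ξ‖ ≤ C := hC _ hmem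
    have h2 : |(x + c • ξ) i0| ≤ ‖x + c • ξ‖ := by
      simpa using norm_le_pi_norm (x + c • ξ) i0
    have h3 : (x + c • ξ) i0 = x i0 + c * ξ i0 := rfl
    have h4 : c * ξ i0 = |C| + 1 := by
      rw [hc]; field_simp
    have h5 : |C| + 1 ≤ (x + c • ξ) i0 := by
      rw [h3, ← h4]
      nlinarith [hx0 i0]
    have h6 : (x + c • ξ) i0 ≤ |(x + c • ξ) i0| := le_abs_self _
    have : |C| + 1 ≤ C := le_trans h5 (le_trans h6 (le_trans h2 h1))
    nlinarith [le_abs_self C]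
  · exact h
end

section
/- Let P ∈ ℝ^{p×p} be symmetric positive definite, Q ∈ ℝ^{p×q}, and R ∈ ℝ^{q×q} symmetric, and consider the symmetric block matrix M = [[P, Q],[Qᵀ, R]]. If R − QᵀP⁻¹Q is strictly copositive, then M is strictly copositive. -/
open Matrix

/-- A symmetric matrix `M` is strictly copositive if `ξᵀ M ξ > 0` for all entrywise
nonnegative `ξ ≠ 0`. -/
def IsStrictCopositive {n : Type*} [Fintype n] (M : Matrix n n ℝ) : Prop :=
  ∀ ξ : n → ℝ, (∀ i, 0 ≤ ξ i) → ξ ≠ 0 → 0 < ξ ⬝ᵥ M.mulVec ξ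

/-- Copositive Schur complements: if `P ≻ 0` and `R − Qᵀ P⁻¹ Q` is strictly copositive,
then the block matrix `[[P, Q], [Qᵀ, R]]` is strictly copositive. -/
theorem copositive_schur_complement
    (p q : ℕ)
    (P : Matrix (Fin p) (Fin p) ℝ) (hP : P.PosDef)
    (Q : Matrix (Fin p) (Fin q) ℝ)
    (R : Matrix (Fin q) (Fin q) ℝ) (hR : Rᵀ = R)
    (h : IsStrictCopositive (R - Qᵀ * P⁻¹ * Q)) :
    IsStrictCopositive (fromBlocks P Q Qᵀ R) := by
  intro ξ hξ hξ0
  haveI : Invertible P := P.invertibleOfIsUnitDet (isUnit_iff_ne_zero.mpr hP.det_pos.ne')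
  have hQ : Qᴴ = Qᵀ := by ext i j; simp [conjTranspose_apply]
  have key := schur_complement_eq₁₁ (α := ℝ) Q R (ξ ∘ Sum.inl) (ξ ∘ Sum.inr) hP.1
  rw [hQ] at key
  rw [dotProduct_mulVec, ← Sum.elim_comp_inl_inr ξ]
  have hsr : star (ξ ∘ Sum.inl ⊕ᵥ ξ ∘ Sum.inr) = (ξ ∘ Sum.inl ⊕ᵥ ξ ∘ Sum.inr) := by
    ext i; simp
  rw [hsr] at key
  rw [key]
  set v := ξ ∘ Sum.inl + (P⁻¹ * Q) *ᵥ (ξ ∘ Sum.inr) with hv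
  have hvstar : star v = v := by ext i; simp
  have hystar : star (ξ ∘ Sum.inr) = ξ ∘ Sum.inr := by ext i; simp
  rw [hvstar, hystar]
  by_cases hy : ξ ∘ Sum.inr = 0
  · have hx : ξ ∘ Sum.inl ≠ 0 := by
      intro hx
      apply hξ0
      ext i
      cases i with
      | inl i => exact congrFun hx i
      | inr i => exact congrFun hy i
    have hv' : v = ξ ∘ Sum.inl := by rw [hv, hy, mulVec_zero, add_zero]
    rw [hy, hv']
    simp only [dotProduct_zero, zero_dotProduct, add_zero]
    have := (posDef_iff_dotProduct_mulVec.mp hP).2 (x := ξ ∘ Sum.inl) hx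
    simpa [dotProduct_mulVec] using this
  · have h2 : 0 < (ξ ∘ Sum.inr) ᵥ* (R - Qᵀ * P⁻¹ * Q) ⬝ᵥ (ξ ∘ Sum.inr) := by
      have := h (ξ ∘ Sum.inr) (fun i => hξ _) hy
      rwa [dotProduct_mulVec] at this
    have h1 : 0 ≤ v ᵥ* P ⬝ᵥ v := by
      have := (posSemidef_iff_dotProduct_mulVec.mp hP.posSemidef).2 v
      simpa [dotProduct_mulVec] using this
    linarith
end

section
/- Let S ∈ ℝ^{J×K}, A ∈ ℝ^{M×K}, and b ∈ ℝ^K, and suppose that the only ξ ∈ ℝ^K with ξ ≥ 0 and Sξ = 0 is ξ = 0. Then there exist scalars ρ > 0 and τ > 0 such that the (K+1)×(K+1) block matrix [[ρSᵀS − AᵀA, −½b], [−½bᵀ, τ]] is strictly copositive. (In particular, the dual copositive program associated with the robust quadratic objective admits a Slater point.) -/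
open Matrix

private lemma dp_self_nonneg {n : Type*} [Fintype n] (v : n → ℝ) : 0 ≤ v ⬝ᵥ v :=
  Finset.sum_nonneg fun _ _ => mul_self_nonneg _

private lemma key (J K M : ℕ) (S : Matrix (Fin J) (Fin K) ℝ)
    (A : Matrix (Fin M) (Fin K) ℝ) (b : Fin K → ℝ)
    (hrec : ∀ ξ : Fin K → ℝ, (∀ i, 0 ≤ ξ i) → S.mulVec ξ = 0 → ξ = 0) :
    ∃ ρ : ℝ, 0 < ρ ∧ ∀ x : Fin K → ℝ, (∀ i, 0 ≤ x i) → x ≠ 0 →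
      A.mulVec x ⬝ᵥ A.mulVec x + (b ⬝ᵥ x) ^ 2 / 2 < ρ * (S.mulVec x ⬝ᵥ S.mulVec x) := by
  classical
  set f : (Fin K → ℝ) → ℝ := fun x => S.mulVec x ⬝ᵥ S.mulVec x with hf
  set g : (Fin K → ℝ) → ℝ := fun x => A.mulVec x ⬝ᵥ A.mulVec x + (b ⬝ᵥ x) ^ 2 / 2 with hg
  have hSv : Continuous fun x : Fin K → ℝ => S *ᵥ x :=
    continuous_const.matrix_mulVec continuous_id
  have hAv : Continuous fun x : Fin K → ℝ => A *ᵥ x :=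
    continuous_const.matrix_mulVec continuous_id
  have hfc : Continuous f := hSv.dotProduct hSv
  have hgc : Continuous g := by
    apply Continuous.add (hAv.dotProduct hAv)
    exact ((continuous_const.dotProduct continuous_id).pow 2).div_const 2
  -- homogeneity
  have hom : ∀ (c : ℝ) (u : Fin K → ℝ), f (c • u) = c ^ 2 * f u ∧ g (c • u) = c ^ 2 * g u := by
    intro c u
    have h1 : S *ᵥ (c • u) = c • (S *ᵥ u) := by rw [mulVec_smul]
    have h2 : A *ᵥ (c • u) = c • (A *ᵥ u) := by rw [mulVec_smul]
    have h3 : b ⬝ᵥ (c • u) = c * (b ⬝ᵥ u) := by rw [dotProduct_smul]; rfl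
    constructor
    · simp only [hf, h1, smul_dotProduct, dotProduct_smul, smul_eq_mul]; ring
    · simp only [hg, h2, h3, smul_dotProduct, dotProduct_smul, smul_eq_mul]; ring
  -- the compact sphere slice
  set C : Set (Fin K → ℝ) := {x | (∀ i, 0 ≤ x i) ∧ ‖x‖ = 1} with hC
  have hCclosed : IsClosed C := by
    have h1 : IsClosed {x : Fin K → ℝ | ∀ i, 0 ≤ x i} := by
      simpa only [Set.setOf_forall] using
        isClosed_iInter fun i : Fin K =>
          isClosed_le continuous_const (continuous_apply i)
    have h2 : IsClosed {x : Fin K → ℝ | ‖x‖ = 1} :=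
      isClosed_eq continuous_norm continuous_const
    exact h1.inter h2
  have hCcompact : IsCompact C := by
    apply (isCompact_closedBall (0 : Fin K → ℝ) 1).of_isClosed_subset hCclosed
    intro x hx
    simp [Metric.mem_closedBall, dist_zero_right, hx.2]
  have hfpos : ∀ u ∈ C, 0 < f u := by
    intro u hu
    rcases lt_or_eq_of_le (dp_self_nonneg (S *ᵥ u)) with h | h
    · exact h
    · exfalso
      have : S *ᵥ u = 0 := dotProduct_self_eq_zero.mp h.symm
      have hu0 : u = 0 := hrec u hu.1 this
      rw [hu0] at hu
      have h2 : ‖(0 : Fin K → ℝ)‖ = 1 := hu.2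
      simp at h2
  -- get ρ
  rcases C.eq_empty_or_nonempty with hCe | hCne
  · refine ⟨1, one_pos, fun x hx hx0 => ?_⟩
    exfalso
    have hxn : ‖x‖ ≠ 0 := norm_ne_zero_iff.mpr hx0
    have : (‖x‖⁻¹ • x) ∈ C := by
      constructor
      · intro i
        exact mul_nonneg (inv_nonneg.mpr (norm_nonneg x)) (hx i)
      · rw [norm_smul, norm_inv, norm_norm, inv_mul_cancel₀ hxn]
    rw [hCe] at this; exact this
  · obtain ⟨u₀, hu₀C, hu₀'⟩ := hCcompact.exists_isMinOn hCne hfc.continuousOn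
    obtain ⟨v₀, hv₀C, hv₀'⟩ := hCcompact.exists_isMaxOn hCne hgc.continuousOn
    have hu₀ : ∀ u ∈ C, f u₀ ≤ f u := fun u hu => hu₀' hu
    have hv₀ : ∀ u ∈ C, g u ≤ g v₀ := fun u hu => hv₀' hu
    have hm : 0 < f u₀ := hfpos u₀ hu₀C
    have hGnn : 0 ≤ g v₀ := by
      have := hv₀ u₀ hu₀C
      have hgnn : ∀ w, 0 ≤ g w := fun w =>
        add_nonneg (dp_self_nonneg _) (div_nonneg (sq_nonneg _) two_pos.le)
      exact hgnn v₀
    refine ⟨(g v₀ + 1) / f u₀, div_pos (by linarith) hm, ?_⟩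
    have hsphere : ∀ u ∈ C, g u < (g v₀ + 1) / f u₀ * f u := by
      intro u huC
      have h1 : (g v₀ + 1) / f u₀ * f u₀ ≤ (g v₀ + 1) / f u₀ * f u := by
        apply mul_le_mul_of_nonneg_left (hu₀ u huC) (le_of_lt (div_pos (by linarith) hm))
      rw [div_mul_cancel₀ _ hm.ne'] at h1
      have h2 := hv₀ u huC
      calc g u ≤ g v₀ := h2
        _ < g v₀ + 1 := by linarith
        _ ≤ (g v₀ + 1) / f u₀ * f u := h1
    intro x hx hx0
    have hxn : (0:ℝ) < ‖x‖ := norm_pos_iff.mpr hx0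
    set u := ‖x‖⁻¹ • x with hu
    have huC : u ∈ C := by
      constructor
      · intro i; exact mul_nonneg (inv_nonneg.mpr (norm_nonneg x)) (hx i)
      · rw [norm_smul, norm_inv, norm_norm, inv_mul_cancel₀ hxn.ne']
    have hxu : x = ‖x‖ • u := by
      rw [hu, smul_smul, mul_inv_cancel₀ hxn.ne', one_smul]
    have h1 := (hom ‖x‖ u).1
    have h2 := (hom ‖x‖ u).2
    rw [← hxu] at h1 h2
    have := hsphere u huC
    have hc2 : (0:ℝ) < ‖x‖ ^ 2 := by positivity
    calc g x = ‖x‖ ^ 2 * g u := h2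
      _ < ‖x‖ ^ 2 * ((g v₀ + 1) / f u₀ * f u) := by
          exact (mul_lt_mul_iff_right₀ hc2).mpr this
      _ = (g v₀ + 1) / f u₀ * (‖x‖ ^ 2 * f u) := by ring
      _ = (g v₀ + 1) / f u₀ * f x := by rw [← h1]

/-- Existence of a Slater point for the dual copositive program: if the recession cone of
`{ξ ≥ 0 : Sξ = 0}` is trivial, then for suitable `ρ, τ > 0` the block matrix
`[[ρSᵀS − AᵀA, −½b], [−½bᵀ, τ]]` is strictly copositive. -/
theorem slater_point_exists
    (J K M : ℕ)
    (S : Matrix (Fin J) (Fin K) ℝ)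
    (A : Matrix (Fin M) (Fin K) ℝ) (b : Fin K → ℝ)
    (hrec : ∀ ξ : Fin K → ℝ, (∀ i, 0 ≤ ξ i) → S.mulVec ξ = 0 → ξ = 0) :
    ∃ ρ τ : ℝ, 0 < ρ ∧ 0 < τ ∧
      IsStrictCopositive
        (fromBlocks
          (ρ • (Sᵀ * S) - Aᵀ * A)
          (of fun i (_ : Unit) => -(b i) / 2)
          (of fun (_ : Unit) j => -(b j) / 2)
          (of fun (_ : Unit) (_ : Unit) => τ)) := by
  obtain ⟨ρ, hρ, hkey⟩ := key J K M S A b hrec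
  refine ⟨ρ, 1, hρ, one_pos, ?_⟩
  intro ξ hnn hne
  set x : Fin K → ℝ := ξ ∘ Sum.inl with hx
  set t : ℝ := ξ (Sum.inr ()) with ht
  have hξ : ξ = Sum.elim x (fun _ => t) := by
    funext i
    cases i with
    | inl i => rfl
    | inr u => cases u; rfl
  have hxST : x ⬝ᵥ (Sᵀ * S).mulVec x = S.mulVec x ⬝ᵥ S.mulVec x := by
    rw [← mulVec_mulVec, dotProduct_mulVec, vecMul_transpose]
  have hxAT : x ⬝ᵥ (Aᵀ * A).mulVec x = A.mulVec x ⬝ᵥ A.mulVec x := by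
    rw [← mulVec_mulVec, dotProduct_mulVec, vecMul_transpose]
  have hB : (of fun i (_ : Unit) => -(b i) / 2) *ᵥ (fun _ => t) =
      fun i => -(b i) / 2 * t := by
    funext i; simp [mulVec, dotProduct]
  have hxB : x ⬝ᵥ (fun i => -(b i) / 2 * t) = -(t / 2) * (b ⬝ᵥ x) := by
    simp only [dotProduct, Finset.mul_sum]
    apply Finset.sum_congr rfl
    intros; ring
  have hCx : ((of fun (_ : Unit) j => -(b j) / 2) *ᵥ x) = fun _ : Unit => -(1/2) * (b ⬝ᵥ x) := by
    funext u
    simp only [mulVec, dotProduct, of_apply, Finset.mul_sum]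
    apply Finset.sum_congr rfl
    intros; ring
  have hD : ((of fun (_ : Unit) (_ : Unit) => (1:ℝ)) *ᵥ (fun _ => t)) = fun _ : Unit => t := by
    funext u; simp [mulVec, dotProduct]
  have key_eq : ξ ⬝ᵥ (fromBlocks
          (ρ • (Sᵀ * S) - Aᵀ * A)
          (of fun i (_ : Unit) => -(b i) / 2)
          (of fun (_ : Unit) j => -(b j) / 2)
          (of fun (_ : Unit) (_ : Unit) => (1:ℝ))) *ᵥ ξ =
      ρ * (S.mulVec x ⬝ᵥ S.mulVec x) - A.mulVec x ⬝ᵥ A.mulVec x - t * (b ⬝ᵥ x) + t ^ 2 := by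
    conv_lhs => rw [hξ]
    rw [fromBlocks_mulVec]
    simp only [Sum.elim_comp_inl, Sum.elim_comp_inr]
    rw [sumElim_dotProduct_sumElim, hB, hCx, hD]
    rw [dotProduct_add, dotProduct_add, sub_mulVec, dotProduct_sub, smul_mulVec,
      dotProduct_smul, hxST, hxAT, hxB]
    simp only [dotProduct, Finset.univ_unique, Finset.sum_singleton, smul_eq_mul]
    ring
  rw [key_eq]
  by_cases hx0 : x = 0
  · have ht0 : t ≠ 0 := by
      intro h
      apply hne
      rw [hξ, hx0, h]
      funext i; cases i <;> simp
    have htnn : 0 ≤ t := hnn (Sum.inr ())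
    rw [hx0]
    simp only [mulVec_zero, dotProduct_zero, zero_dotProduct]
    have : 0 < t := lt_of_le_of_ne htnn (Ne.symm ht0)
    nlinarith
  · have hxnn : ∀ i, 0 ≤ x i := fun i => hnn (Sum.inl i)
    have h := hkey x hxnn hx0
    nlinarith [sq_nonneg (t - b ⬝ᵥ x), sq_nonneg t]
end

section
/- Let S ∈ ℝ^{J×K}, t ∈ ℝ^J, A ∈ ℝ^{M×K}, b ∈ ℝ^K, and L ≤ K. Assume: (i) the set Ξ_B = { ξ ∈ ℝ^K : ξ ≥ 0, Sξ = t, ξ_ℓ ∈ {0,1} for all ℓ ∈ {1,…,L} } is nonempty; (ii) the only ξ ≥ 0 with Sξ = 0 is ξ = 0; and (iii) every ξ ≥ 0 with Sξ = t satisfies ξ_ℓ ≤ 1 for all ℓ ∈ {1,…,L}. Then sup{ ‖Aξ‖² + bᵀξ : ξ ∈ Ξ_B } = inf{ tᵀψ + (t∘t)ᵀφ + τ : τ ∈ ℝ, ψ, φ ∈ ℝ^J, γ ∈ ℝ^L such that the (K+1)×(K+1) block matrix [[Sᵀ diag(φ) S − AᵀA − diag(γ̃), ½(Sᵀψ − b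 + γ̃)], [½(Sᵀψ − b + γ̃)ᵀ, τ]] is copositive }, where γ̃ ∈ ℝ^K has γ̃_ℓ = γ_ℓ for ℓ ∈ {1,…,L} and γ̃_ℓ = 0 otherwise. -/
open Matrix

section AuxDefs
variable {J K M L : ℕ}

def pfAux (S : Matrix (Fin J) (Fin K) ℝ) (t : Fin J → ℝ) (x : (Fin K → ℝ) × ℝ) : ℝ :=
  ∑ j, (S.mulVec x.1 j - x.2 * t j) ^ 2

def gfAux (L : ℕ) (x : (Fin K → ℝ) × ℝ) : ℝ :=
  ∑ ℓ : Fin K, if (ℓ : ℕ) < L then x.1 ℓ * (x.2 - x.1 ℓ) else 0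

def qfAux (A : Matrix (Fin M) (Fin K) ℝ) (b : Fin K → ℝ) (c : ℝ) (x : (Fin K → ℝ) × ℝ) : ℝ :=
  -(∑ i, (A.mulVec x.1 i) ^ 2) - x.2 * (b ⬝ᵥ x.1) + c * x.2 ^ 2

end AuxDefs

lemma quad_block (K : ℕ) (B : Matrix (Fin K) (Fin K) ℝ) (c : Fin K → ℝ) (d : ℝ) (ξ : Fin K → ℝ) (s : ℝ) :
    Sum.elim ξ (fun _ : Unit => s) ⬝ᵥ
      (fromBlocks B (of fun i (_ : Unit) => c i) (of fun (_ : Unit) j => c j)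
        (of fun (_ : Unit) (_ : Unit) => d)).mulVec (Sum.elim ξ (fun _ => s)) =
    ξ ⬝ᵥ B.mulVec ξ + 2 * s * (c ⬝ᵥ ξ) + d * s ^ 2 := by
  simp only [mulVec, dotProduct, Fintype.sum_sum_type, Sum.elim_inl,
    Sum.elim_inr, of_apply, Pi.add_apply, Finset.univ_unique, Finset.sum_singleton,
    fromBlocks_apply₁₁, fromBlocks_apply₁₂, fromBlocks_apply₂₁, fromBlocks_apply₂₂,
    Finset.mul_sum, Finset.sum_mul, mul_add, Finset.sum_add_distrib]
  have h2 : ∑ x, ξ x * (c x * s) = ∑ x, s * (c x * ξ x) :=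
    Finset.sum_congr rfl (fun x _ => by ring)
  have h3 : ∑ x, s * c x * ξ x = ∑ x, s * (c x * ξ x) :=
    Finset.sum_congr rfl (fun x _ => by ring)
  have h4 : ∑ x, 2 * s * (c x * ξ x) = ∑ x, s * (c x * ξ x) + ∑ x, s * (c x * ξ x) := by
    rw [← Finset.sum_add_distrib]
    exact Finset.sum_congr rfl (fun x _ => by ring)
  try rw [h2]
  try rw [h3]
  try rw [h4]
  ring

lemma quadB (J K M : ℕ) (S : Matrix (Fin J) (Fin K) ℝ) (A : Matrix (Fin M) (Fin K) ℝ)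
    (φ : Fin J → ℝ) (g : Fin K → ℝ) (ξ : Fin K → ℝ) :
    ξ ⬝ᵥ ((Sᵀ * diagonal φ * S - Aᵀ * A - diagonal g).mulVec ξ) =
    (∑ j, φ j * (S.mulVec ξ j) ^ 2) - (A.mulVec ξ ⬝ᵥ A.mulVec ξ) - ∑ ℓ, g ℓ * (ξ ℓ) ^ 2 := by
  rw [sub_mulVec, sub_mulVec, dotProduct_sub, dotProduct_sub]
  congr 1
  · congr 1
    · rw [← mulVec_mulVec, ← mulVec_mulVec, dotProduct_mulVec, vecMul_transpose]
      simp [mulVec_diagonal, dotProduct, mul_comm, sq]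
      exact Finset.sum_congr rfl (fun x _ => by ring)
    · rw [← mulVec_mulVec, dotProduct_mulVec, vecMul_transpose]
  · simp [dotProduct, mulVec_diagonal, sq]
    exact Finset.sum_congr rfl (fun x _ => by ring)

lemma quadM (J K M : ℕ) (S : Matrix (Fin J) (Fin K) ℝ) (A : Matrix (Fin M) (Fin K) ℝ)
    (b : Fin K → ℝ) (τ : ℝ) (ψ φ : Fin J → ℝ) (g : Fin K → ℝ) (ξ : Fin K → ℝ) (s : ℝ) :
    Sum.elim ξ (fun _ : Unit => s) ⬝ᵥ
      (fromBlocks (Sᵀ * diagonal φ * S - Aᵀ * A - diagonal g)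
        (of fun i (_ : Unit) => (Sᵀ.mulVec ψ i - b i + g i) / 2)
        (of fun (_ : Unit) j => (Sᵀ.mulVec ψ j - b j + g j) / 2)
        (of fun (_ : Unit) (_ : Unit) => τ)).mulVec (Sum.elim ξ (fun _ => s)) =
    (∑ j, φ j * (S.mulVec ξ j) ^ 2) - (A.mulVec ξ ⬝ᵥ A.mulVec ξ) - (∑ ℓ, g ℓ * (ξ ℓ) ^ 2)
      + s * (ψ ⬝ᵥ S.mulVec ξ - b ⬝ᵥ ξ + g ⬝ᵥ ξ) + τ * s ^ 2 := by
  rw [quad_block, quadB]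
  have : (fun i => (Sᵀ.mulVec ψ i - b i + g i) / 2) ⬝ᵥ ξ
      = (ψ ⬝ᵥ S.mulVec ξ - b ⬝ᵥ ξ + g ⬝ᵥ ξ) / 2 := by
    have hS : Sᵀ.mulVec ψ ⬝ᵥ ξ = ψ ⬝ᵥ S.mulVec ξ := by
      rw [mulVec_transpose, ← dotProduct_mulVec]
    rw [← hS]
    simp only [dotProduct, Finset.sum_div, ← Finset.sum_sub_distrib, ← Finset.sum_add_distrib]
    exact Finset.sum_congr rfl (fun x _ => by ring)
  rw [this]
  ring

lemma cont_mulVec_comp {n m : ℕ} {X : Type*} [TopologicalSpace X] (S : Matrix (Fin n) (Fin m) ℝ)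
    (f : X → (Fin m → ℝ)) (hf : Continuous f) (j : Fin n) :
    Continuous fun x => S.mulVec (f x) j := by
  simp only [mulVec, dotProduct]
  exact continuous_finset_sum _ fun i _ => continuous_const.mul ((continuous_apply i).comp hf)

lemma cont_dot {m : ℕ} {X : Type*} [TopologicalSpace X] (b : Fin m → ℝ)
    (f : X → (Fin m → ℝ)) (hf : Continuous f) : Continuous fun x => b ⬝ᵥ f x := by
  simp only [dotProduct]
  exact continuous_finset_sum _ fun i _ => continuous_const.mul ((continuous_apply i).comp hf)

lemma slice0_compact (K : ℕ) :
    IsCompact {ξ : Fin K → ℝ | (∀ i, 0 ≤ ξ i) ∧ (∑ i, ξ i ^ 2) = 1} := by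
  apply Metric.isCompact_of_isClosed_isBounded
  · have h1 : IsClosed {ξ : Fin K → ℝ | ∀ i, 0 ≤ ξ i} := by
      have : {ξ : Fin K → ℝ | ∀ i, 0 ≤ ξ i} = ⋂ i, {ξ | 0 ≤ ξ i} := by
        ext ξ; simp [Set.mem_iInter]
      rw [this]
      exact isClosed_iInter fun i => isClosed_le continuous_const (continuous_apply i)
    have h2 : IsClosed {ξ : Fin K → ℝ | (∑ i, ξ i ^ 2) = 1} :=
      isClosed_eq (continuous_finset_sum _ fun i _ => (continuous_apply i).pow 2)
        continuous_const
    exact h1.inter h2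
  · rw [Metric.isBounded_iff_subset_closedBall 0]
    refine ⟨1, fun ξ hξ => ?_⟩
    rw [Metric.mem_closedBall, dist_zero_right]
    rw [pi_norm_le_iff_of_nonneg zero_le_one]
    intro i
    rw [Real.norm_eq_abs, ← sq_le_one_iff_abs_le_one]
    calc ξ i ^ 2 ≤ ∑ k, ξ k ^ 2 :=
          Finset.single_le_sum (fun k _ => sq_nonneg (ξ k)) (Finset.mem_univ i)
        _ = 1 := hξ.2

lemma sliceP_compact (K : ℕ) :
    IsCompact {x : (Fin K → ℝ) × ℝ | (∀ i, 0 ≤ x.1 i) ∧ 0 ≤ x.2 ∧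
      ((∑ i, x.1 i ^ 2) + x.2 ^ 2) = 1} := by
  apply Metric.isCompact_of_isClosed_isBounded
  · have h1 : IsClosed {x : (Fin K → ℝ) × ℝ | ∀ i, 0 ≤ x.1 i} := by
      have : {x : (Fin K → ℝ) × ℝ | ∀ i, 0 ≤ x.1 i} = ⋂ i, {x | 0 ≤ x.1 i} := by
        ext x; simp [Set.mem_iInter]
      rw [this]
      exact isClosed_iInter fun i =>
        isClosed_le continuous_const ((continuous_apply i).comp continuous_fst)
    have h2 : IsClosed {x : (Fin K → ℝ) × ℝ | 0 ≤ x.2} :=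
      isClosed_le continuous_const continuous_snd
    have h3 : IsClosed {x : (Fin K → ℝ) × ℝ | ((∑ i, x.1 i ^ 2) + x.2 ^ 2) = 1} :=
      isClosed_eq (((continuous_finset_sum _ fun i _ =>
        (((continuous_apply i).comp continuous_fst).pow 2))).add
        (continuous_snd.pow 2)) continuous_const
    exact h1.inter (h2.inter h3)
  · rw [Metric.isBounded_iff_subset_closedBall 0]
    refine ⟨1, fun x hx => ?_⟩
    rw [Metric.mem_closedBall, dist_zero_right, Prod.norm_def]
    have hterm : ∀ i, x.1 i ^ 2 ≤ 1 := by
      intro i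
      calc x.1 i ^ 2 ≤ ∑ k, x.1 k ^ 2 :=
            Finset.single_le_sum (fun k _ => sq_nonneg (x.1 k)) (Finset.mem_univ i)
        _ ≤ (∑ k, x.1 k ^ 2) + x.2 ^ 2 := le_add_of_nonneg_right (sq_nonneg _)
        _ = 1 := hx.2.2
    have h2 : x.2 ^ 2 ≤ 1 := by
      calc x.2 ^ 2 ≤ (∑ k, x.1 k ^ 2) + x.2 ^ 2 :=
            le_add_of_nonneg_left (Finset.sum_nonneg fun k _ => sq_nonneg _)
        _ = 1 := hx.2.2
    apply max_le
    · rw [pi_norm_le_iff_of_nonneg zero_le_one]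
      intro i
      rw [Real.norm_eq_abs, ← sq_le_one_iff_abs_le_one]
      exact hterm i
    · rw [Real.norm_eq_abs, ← sq_le_one_iff_abs_le_one]
      exact h2

lemma sum_sq_mulVec_smul {n m : ℕ} (S : Matrix (Fin n) (Fin m) ℝ) (r : ℝ) (ξ : Fin m → ℝ) :
    ∑ j, (S.mulVec (r • ξ) j) ^ 2 = r ^ 2 * ∑ j, (S.mulVec ξ j) ^ 2 := by
  rw [mulVec_smul, Finset.mul_sum]
  exact Finset.sum_congr rfl fun j _ => by simp [smul_eq_mul]; ring

lemma coercive {J K : ℕ} (S : Matrix (Fin J) (Fin K) ℝ)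
    (hrec : ∀ ξ : Fin K → ℝ, (∀ i, 0 ≤ ξ i) → S.mulVec ξ = 0 → ξ = 0) :
    ∃ c > 0, ∀ ξ : Fin K → ℝ, (∀ i, 0 ≤ ξ i) →
      c * (∑ i, ξ i ^ 2) ≤ ∑ j, (S.mulVec ξ j) ^ 2 := by
  have hnorm : ∀ ξ : Fin K → ℝ, (∀ i, 0 ≤ ξ i) → (∑ i, ξ i ^ 2) ≠ 0 →
      ((Real.sqrt (∑ i, ξ i ^ 2))⁻¹ • ξ) ∈
        {ξ : Fin K → ℝ | (∀ i, 0 ≤ ξ i) ∧ (∑ i, ξ i ^ 2) = 1} := by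
    intro ξ hξ hn
    have hpos : 0 < ∑ i, ξ i ^ 2 :=
      lt_of_le_of_ne (Finset.sum_nonneg fun i _ => sq_nonneg _) (Ne.symm hn)
    have hs : 0 < Real.sqrt (∑ i, ξ i ^ 2) := Real.sqrt_pos.mpr hpos
    constructor
    · intro i
      exact mul_nonneg (inv_nonneg.mpr hs.le) (hξ i)
    · have : ∑ i, ((Real.sqrt (∑ i, ξ i ^ 2))⁻¹ • ξ) i ^ 2
          = ((Real.sqrt (∑ i, ξ i ^ 2))⁻¹) ^ 2 * ∑ i, ξ i ^ 2 := by
        rw [Finset.mul_sum]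
        exact Finset.sum_congr rfl fun i _ => by simp [smul_eq_mul]; ring
      rw [this, inv_pow, Real.sq_sqrt hpos.le, inv_mul_cancel₀ hn]
  by_cases hT : {ξ : Fin K → ℝ | (∀ i, 0 ≤ ξ i) ∧ (∑ i, ξ i ^ 2) = 1}.Nonempty
  · obtain ⟨ξ₀, hξ₀, hmin⟩ := (slice0_compact K).exists_isMinOn hT
      ((continuous_finset_sum _ fun j _ =>
        (cont_mulVec_comp S id continuous_id j).pow 2).continuousOn)
    set c := ∑ j, (S.mulVec ξ₀ j) ^ 2 with hc
    have hcpos : 0 < c := by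
      rcases lt_or_eq_of_le (Finset.sum_nonneg fun j _ =>
        sq_nonneg (S.mulVec ξ₀ j) : (0:ℝ) ≤ c) with h | h
      · exact h
      · exfalso
        have hz : S.mulVec ξ₀ = 0 := by
          funext j
          have := (Finset.sum_eq_zero_iff_of_nonneg
            (fun j _ => sq_nonneg (S.mulVec ξ₀ j))).mp h.symm j (Finset.mem_univ j)
          exact pow_eq_zero_iff (n := 2) (by norm_num) |>.mp this
        have := hrec ξ₀ hξ₀.1 hz
        rw [this] at hξ₀
        simp at hξ₀
    refine ⟨c, hcpos, fun ξ hξ => ?_⟩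
    by_cases hn : (∑ i, ξ i ^ 2) = 0
    · rw [hn, mul_zero]
      exact Finset.sum_nonneg fun j _ => sq_nonneg _
    · have hpos : 0 < ∑ i, ξ i ^ 2 :=
        lt_of_le_of_ne (Finset.sum_nonneg fun i _ => sq_nonneg _) (Ne.symm hn)
      have hmem := hnorm ξ hξ hn
      have hle : c ≤ ∑ j, (S.mulVec ((Real.sqrt (∑ i, ξ i ^ 2))⁻¹ • ξ) j) ^ 2 := hmin hmem
      rw [sum_sq_mulVec_smul] at hle
      have hr2 : ((Real.sqrt (∑ i, ξ i ^ 2))⁻¹) ^ 2 = (∑ i, ξ i ^ 2)⁻¹ := by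
        rw [inv_pow, Real.sq_sqrt hpos.le]
      rw [hr2] at hle
      -- hle : c ≤ (∑ξ²)⁻¹ * ∑(Sξ)²
      calc c * (∑ i, ξ i ^ 2) ≤ ((∑ i, ξ i ^ 2)⁻¹ * ∑ j, (S.mulVec ξ j) ^ 2) * (∑ i, ξ i ^ 2) :=
            mul_le_mul_of_nonneg_right hle hpos.le
        _ = ∑ j, (S.mulVec ξ j) ^ 2 := by field_simp
  · refine ⟨1, one_pos, fun ξ hξ => ?_⟩
    have hn : (∑ i, ξ i ^ 2) = 0 := by
      by_contra hn
      exact hT ⟨_, hnorm ξ hξ hn⟩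
    rw [hn, mul_zero]
    exact Finset.sum_nonneg fun j _ => sq_nonneg _

lemma primal_attain {J K M L : ℕ}
    (S : Matrix (Fin J) (Fin K) ℝ) (t : Fin J → ℝ)
    (A : Matrix (Fin M) (Fin K) ℝ) (b : Fin K → ℝ)
    (hne : ∃ ξ : Fin K → ℝ, (∀ i, 0 ≤ ξ i) ∧ S.mulVec ξ = t ∧
      ∀ ℓ : Fin K, (ℓ : ℕ) < L → ξ ℓ = 0 ∨ ξ ℓ = 1)
    (hrec : ∀ ξ : Fin K → ℝ, (∀ i, 0 ≤ ξ i) → S.mulVec ξ = 0 → ξ = 0) :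
    ∃ v : ℝ, (∃ ξ : Fin K → ℝ, ((∀ i, 0 ≤ ξ i) ∧ S.mulVec ξ = t ∧
        (∀ ℓ : Fin K, (ℓ : ℕ) < L → ξ ℓ = 0 ∨ ξ ℓ = 1)) ∧
        A.mulVec ξ ⬝ᵥ A.mulVec ξ + b ⬝ᵥ ξ = v) ∧
      ∀ ξ : Fin K → ℝ, (∀ i, 0 ≤ ξ i) → S.mulVec ξ = t →
        (∀ ℓ : Fin K, (ℓ : ℕ) < L → ξ ℓ = 0 ∨ ξ ℓ = 1) →
        A.mulVec ξ ⬝ᵥ A.mulVec ξ + b ⬝ᵥ ξ ≤ v := by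
  set P : Set (Fin K → ℝ) := {ξ | (∀ i, 0 ≤ ξ i) ∧ S.mulVec ξ = t ∧
    (∀ ℓ : Fin K, (ℓ : ℕ) < L → ξ ℓ = 0 ∨ ξ ℓ = 1)} with hP
  have hPc : IsCompact P := by
    obtain ⟨c, hcpos, hc⟩ := coercive S hrec
    apply Metric.isCompact_of_isClosed_isBounded
    · have h1 : IsClosed {ξ : Fin K → ℝ | ∀ i, 0 ≤ ξ i} := by
        have : {ξ : Fin K → ℝ | ∀ i, 0 ≤ ξ i} = ⋂ i, {ξ | 0 ≤ ξ i} := by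
          ext ξ; simp [Set.mem_iInter]
        rw [this]
        exact isClosed_iInter fun i => isClosed_le continuous_const (continuous_apply i)
      have h2 : IsClosed {ξ : Fin K → ℝ | S.mulVec ξ = t} :=
        isClosed_eq (continuous_pi fun j => cont_mulVec_comp S id continuous_id j)
          continuous_const
      have h3 : IsClosed {ξ : Fin K → ℝ | ∀ ℓ : Fin K, (ℓ : ℕ) < L → ξ ℓ = 0 ∨ ξ ℓ = 1} := by
        have : {ξ : Fin K → ℝ | ∀ ℓ : Fin K, (ℓ : ℕ) < L → ξ ℓ = 0 ∨ ξ ℓ = 1}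
            = ⋂ ℓ : Fin K, {ξ | (ℓ : ℕ) < L → ξ ℓ = 0 ∨ ξ ℓ = 1} := by
          ext ξ; simp [Set.mem_iInter]
        rw [this]
        refine isClosed_iInter fun ℓ => ?_
        by_cases h : (ℓ : ℕ) < L
        · have : {ξ : Fin K → ℝ | (ℓ : ℕ) < L → ξ ℓ = 0 ∨ ξ ℓ = 1}
              = {ξ | ξ ℓ = 0} ∪ {ξ | ξ ℓ = 1} := by
            ext ξ; simp [h]
          rw [this]
          exact (isClosed_eq (continuous_apply ℓ) continuous_const).union
            (isClosed_eq (continuous_apply ℓ) continuous_const)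
        · have : {ξ : Fin K → ℝ | (ℓ : ℕ) < L → ξ ℓ = 0 ∨ ξ ℓ = 1} = Set.univ := by
            ext ξ; simp [h]
          rw [this]; exact isClosed_univ
      exact h1.inter (h2.inter h3)
    · rw [Metric.isBounded_iff_subset_closedBall 0]
      refine ⟨Real.sqrt ((∑ j, t j ^ 2) / c), fun ξ hξ => ?_⟩
      rw [Metric.mem_closedBall, dist_zero_right]
      have hb1 : ∑ i, ξ i ^ 2 ≤ (∑ j, t j ^ 2) / c := by
        rw [le_div_iff₀ hcpos, mul_comm]
        calc c * ∑ i, ξ i ^ 2 ≤ ∑ j, (S.mulVec ξ j) ^ 2 := hc ξ hξ.1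
          _ = ∑ j, t j ^ 2 := by rw [hξ.2.1]
      have hRnn : (0:ℝ) ≤ (∑ j, t j ^ 2) / c :=
        le_trans (Finset.sum_nonneg fun i _ => sq_nonneg _) hb1
      rw [pi_norm_le_iff_of_nonneg (Real.sqrt_nonneg _)]
      intro i
      rw [Real.norm_eq_abs]
      apply abs_le_of_sq_le_sq _ (Real.sqrt_nonneg _)
      rw [Real.sq_sqrt hRnn]
      calc ξ i ^ 2 ≤ ∑ k, ξ k ^ 2 :=
            Finset.single_le_sum (fun k _ => sq_nonneg (ξ k)) (Finset.mem_univ i)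
        _ ≤ (∑ j, t j ^ 2) / c := hb1
  have hcont : Continuous fun ξ : Fin K → ℝ => A.mulVec ξ ⬝ᵥ A.mulVec ξ + b ⬝ᵥ ξ := by
    apply Continuous.add
    · simp only [dotProduct]
      exact continuous_finset_sum _ fun i _ =>
        (cont_mulVec_comp A id continuous_id i).mul (cont_mulVec_comp A id continuous_id i)
    · exact cont_dot b id continuous_id
  obtain ⟨ξs, hξs, hmax⟩ := hPc.exists_isMaxOn hne hcont.continuousOn
  refine ⟨A.mulVec ξs ⬝ᵥ A.mulVec ξs + b ⬝ᵥ ξs, ⟨ξs, hξs, rfl⟩, fun ξ h1 h2 h3 => ?_⟩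
  exact hmax (⟨h1, h2, h3⟩ : ξ ∈ P)

lemma sigma_select {X : Type*} [TopologicalSpace X] (Dset : Set X) (hD : IsCompact Dset)
    (g q : X → ℝ) (hg : Continuous g) (hq : Continuous q)
    (hg0 : ∀ x ∈ Dset, 0 ≤ g x) (hqg : ∀ x ∈ Dset, g x = 0 → 0 < q x) :
    ∃ σ : ℝ, 0 ≤ σ ∧ ∀ x ∈ Dset, 0 < σ * g x + q x := by
  by_cases hC : (Dset ∩ {x | q x ≤ 0}).Nonempty
  · have hCcomp : IsCompact (Dset ∩ {x | q x ≤ 0}) :=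
      hD.inter_right (isClosed_le hq continuous_const)
    obtain ⟨x₀, hx₀, hgmin⟩ := hCcomp.exists_isMinOn hC hg.continuousOn
    have hx₀D : x₀ ∈ Dset := hx₀.1
    have hg₀pos : 0 < g x₀ := by
      rcases (hg0 x₀ hx₀D).lt_or_eq with h | h
      · exact h
      · exact absurd (hqg x₀ hx₀D h.symm) (not_lt.mpr hx₀.2)
    obtain ⟨x₁, hx₁, hqmax⟩ := hD.exists_isMaxOn ⟨x₀, hx₀D⟩ hq.neg.continuousOn
    have hQm : ∀ x ∈ Dset, -q x ≤ -q x₁ := fun x hx => hqmax hx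
    have hQm0 : 0 ≤ -q x₁ := le_trans (neg_nonneg.mpr hx₀.2) (hQm x₀ hx₀D)
    refine ⟨(-q x₁ + 1) / g x₀, by positivity, fun x hx => ?_⟩
    by_cases hqx : q x ≤ 0
    · have hgx : g x₀ ≤ g x := hgmin ⟨hx, hqx⟩
      have h1 : (-q x₁ + 1) ≤ (-q x₁ + 1) / g x₀ * g x := by
        rw [div_mul_eq_mul_div, le_div_iff₀ hg₀pos]
        exact mul_le_mul_of_nonneg_left hgx (by linarith)
      have h2 : -q x ≤ -q x₁ := hQm x hx
      linarith
    · push_neg at hqx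
      have : 0 ≤ (-q x₁ + 1) / g x₀ * g x := mul_nonneg (by positivity) (hg0 x hx)
      linarith
  · refine ⟨0, le_refl 0, fun x hx => ?_⟩
    rw [zero_mul, zero_add]
    by_contra hqx
    push_neg at hqx
    exact hC ⟨x, hx, hqx⟩

lemma rho_select {X : Type*} [TopologicalSpace X] (Tset : Set X) (hT : IsCompact Tset)
    (p G : X → ℝ) (hp : Continuous p) (hG : Continuous G)
    (hp0 : ∀ x, 0 ≤ p x) (hpos : ∀ x ∈ Tset, G x ≤ 0 → 0 < p x) :
    ∃ ρ : ℝ, 0 ≤ ρ ∧ ∀ x ∈ Tset, 0 ≤ ρ * p x + G x := by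
  by_cases hT' : (Tset ∩ {x | G x ≤ 0}).Nonempty
  · have hT'comp : IsCompact (Tset ∩ {x | G x ≤ 0}) :=
      hT.inter_right (isClosed_le hG continuous_const)
    obtain ⟨x₂, hx₂, hpmin⟩ := hT'comp.exists_isMinOn hT' hp.continuousOn
    have hp₀ : 0 < p x₂ := hpos x₂ hx₂.1 hx₂.2
    obtain ⟨x₃, hx₃, hGmax⟩ := hT.exists_isMaxOn ⟨x₂, hx₂.1⟩ hG.neg.continuousOn
    have hGm : ∀ x ∈ Tset, -G x ≤ -G x₃ := fun x hx => hGmax hx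
    have hGm0 : 0 ≤ -G x₃ := le_trans (neg_nonneg.mpr hx₂.2) (hGm x₂ hx₂.1)
    refine ⟨(-G x₃) / p x₂, by positivity, fun x hx => ?_⟩
    by_cases hGx : G x ≤ 0
    · have hpx : p x₂ ≤ p x := hpmin ⟨hx, hGx⟩
      have h1 : -G x₃ ≤ (-G x₃) / p x₂ * p x := by
        rw [div_mul_eq_mul_div, le_div_iff₀ hp₀]
        exact mul_le_mul_of_nonneg_left hpx hGm0
      have h2 : -G x ≤ -G x₃ := hGm x hx
      linarith
    · push_neg at hGx
      have : 0 ≤ (-G x₃) / p x₂ * p x := mul_nonneg (by positivity) (hp0 x)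
      linarith
  · refine ⟨0, le_refl 0, fun x hx => ?_⟩
    rw [zero_mul, zero_add]
    by_contra hGx
    push_neg at hGx
    exact hT' ⟨x, hx, hGx.le⟩

lemma exists_rho_sigma {J K M L : ℕ}
    (S : Matrix (Fin J) (Fin K) ℝ) (t : Fin J → ℝ)
    (A : Matrix (Fin M) (Fin K) ℝ) (b : Fin K → ℝ)
    (hrec : ∀ ξ : Fin K → ℝ, (∀ i, 0 ≤ ξ i) → S.mulVec ξ = 0 → ξ = 0)
    (hbd : ∀ ξ : Fin K → ℝ, (∀ i, 0 ≤ ξ i) → S.mulVec ξ = t →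
      ∀ ℓ : Fin K, (ℓ : ℕ) < L → ξ ℓ ≤ 1)
    (v ε : ℝ) (hε : 0 < ε)
    (hmax : ∀ ξ : Fin K → ℝ, (∀ i, 0 ≤ ξ i) → S.mulVec ξ = t →
      (∀ ℓ : Fin K, (ℓ : ℕ) < L → ξ ℓ = 0 ∨ ξ ℓ = 1) →
      A.mulVec ξ ⬝ᵥ A.mulVec ξ + b ⬝ᵥ ξ ≤ v) :
    ∃ ρ σ : ℝ, ∀ (ξ : Fin K → ℝ) (s : ℝ), (∀ i, 0 ≤ ξ i) → 0 ≤ s →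
      0 ≤ ρ * (∑ j, (S.mulVec ξ j - s * t j) ^ 2)
        + σ * (∑ ℓ : Fin K, if (ℓ : ℕ) < L then ξ ℓ * (s - ξ ℓ) else 0)
        + (-(∑ i, (A.mulVec ξ i) ^ 2) - s * (b ⬝ᵥ ξ) + (v + ε) * s ^ 2) := by
  classical
  have hpf_cont : Continuous (pfAux S t) := by
    unfold pfAux
    exact continuous_finset_sum _ fun j _ =>
      ((cont_mulVec_comp S Prod.fst continuous_fst j).sub
        (continuous_snd.mul continuous_const)).pow 2
  have hgf_cont : Continuous (gfAux (K := K) L) := by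
    unfold gfAux
    refine continuous_finset_sum _ fun ℓ _ => ?_
    by_cases h : (ℓ : ℕ) < L
    · simp only [if_pos h]
      exact ((continuous_apply ℓ).comp continuous_fst).mul
        (continuous_snd.sub ((continuous_apply ℓ).comp continuous_fst))
    · simp only [if_neg h]; exact continuous_const
  have hqf_cont : Continuous (qfAux A b (v + ε)) := by
    unfold qfAux
    refine Continuous.add (Continuous.sub ?_ ?_) ?_
    · exact (continuous_finset_sum _ fun i _ =>
        (cont_mulVec_comp A Prod.fst continuous_fst i).pow 2).neg
    · exact continuous_snd.mul (cont_dot b Prod.fst continuous_fst)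
    · exact continuous_const.mul (continuous_snd.pow 2)
  set T : Set ((Fin K → ℝ) × ℝ) := {x | (∀ i, 0 ≤ x.1 i) ∧ 0 ≤ x.2 ∧
      ((∑ i, x.1 i ^ 2) + x.2 ^ 2) = 1} with hTdef
  have hTcomp : IsCompact T := sliceP_compact K
  set D : Set ((Fin K → ℝ) × ℝ) := T ∩ {x | ∀ j, S.mulVec x.1 j = x.2 * t j} with hDdef
  have hDcomp : IsCompact D := by
    apply hTcomp.inter_right
    have : {x : (Fin K → ℝ) × ℝ | ∀ j, S.mulVec x.1 j = x.2 * t j}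
        = ⋂ j, {x | S.mulVec x.1 j = x.2 * t j} := by ext x; simp [Set.mem_iInter]
    rw [this]
    exact isClosed_iInter fun j =>
      isClosed_eq (cont_mulVec_comp S Prod.fst continuous_fst j)
        (continuous_snd.mul continuous_const)
  have hDs : ∀ x ∈ D, 0 < x.2 := by
    rintro x ⟨⟨hx1, hx2, hx3⟩, hx4⟩
    rcases hx2.lt_or_eq with h | h
    · exact h
    · exfalso
      have hz : S.mulVec x.1 = 0 := by
        funext j
        have := hx4 j
        rw [← h] at this
        simpa using this
      have := hrec x.1 hx1 hz
      rw [this, ← h] at hx3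
      simp at hx3
  have hDy : ∀ x ∈ D, (∀ i, 0 ≤ (x.2⁻¹ • x.1) i) ∧ S.mulVec (x.2⁻¹ • x.1) = t := by
    intro x hx
    have hs := hDs x hx
    constructor
    · intro i; exact mul_nonneg (inv_nonneg.mpr hs.le) (hx.1.1 i)
    · rw [mulVec_smul]
      funext j
      have := hx.2 j
      simp only [Pi.smul_apply, smul_eq_mul, this]
      field_simp
  have hDle : ∀ x ∈ D, ∀ ℓ : Fin K, (ℓ : ℕ) < L → x.1 ℓ ≤ x.2 := by
    intro x hx ℓ hℓ
    have hs := hDs x hx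
    obtain ⟨hy1, hy2⟩ := hDy x hx
    have := hbd _ hy1 hy2 ℓ hℓ
    simp only [Pi.smul_apply, smul_eq_mul] at this
    calc x.1 ℓ = x.2 * (x.2⁻¹ * x.1 ℓ) := by field_simp
      _ ≤ x.2 * 1 := mul_le_mul_of_nonneg_left this hs.le
      _ = x.2 := mul_one _
  have hgf_nonneg : ∀ x ∈ D, 0 ≤ gfAux L x := by
    intro x hx
    refine Finset.sum_nonneg fun ℓ _ => ?_
    by_cases h : (ℓ : ℕ) < L
    · simp only [if_pos h]
      exact mul_nonneg (hx.1.1 ℓ) (sub_nonneg.mpr (hDle x hx ℓ h))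
    · simp [h]
  have hq_pos_of_g0 : ∀ x ∈ D, gfAux L x = 0 → 0 < qfAux A b (v + ε) x := by
    intro x hx hg0
    have hs := hDs x hx
    obtain ⟨hy1, hy2⟩ := hDy x hx
    have hbin : ∀ ℓ : Fin K, (ℓ : ℕ) < L → (x.2⁻¹ • x.1) ℓ = 0 ∨ (x.2⁻¹ • x.1) ℓ = 1 := by
      intro ℓ hℓ
      have hterm : x.1 ℓ * (x.2 - x.1 ℓ) = 0 := by
        have := (Finset.sum_eq_zero_iff_of_nonneg (fun ℓ' _ => by
          by_cases h : (ℓ' : ℕ) < L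
          · simp only [if_pos h]
            exact mul_nonneg (hx.1.1 ℓ') (sub_nonneg.mpr (hDle x hx ℓ' h))
          · simp [h])).mp hg0 ℓ (Finset.mem_univ ℓ)
        simpa [hℓ] using this
      rcases mul_eq_zero.mp hterm with h | h
      · left; simp [h]
      · right
        have hx1ℓ : x.1 ℓ = x.2 := by linarith [sub_eq_zero.mp h]
        simp only [Pi.smul_apply, smul_eq_mul, hx1ℓ]
        field_simp
    have hvy := hmax _ hy1 hy2 hbin
    have hx1y : x.1 = x.2 • (x.2⁻¹ • x.1) := by
      funext i
      simp only [Pi.smul_apply, smul_eq_mul]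
      field_simp
    have hAy : ∑ i, (A.mulVec x.1 i) ^ 2
        = x.2 ^ 2 * (A.mulVec (x.2⁻¹ • x.1) ⬝ᵥ A.mulVec (x.2⁻¹ • x.1)) := by
      conv_lhs => rw [hx1y]
      rw [mulVec_smul]
      simp only [dotProduct, Finset.mul_sum]
      exact Finset.sum_congr rfl fun i _ => by simp only [Pi.smul_apply, smul_eq_mul]; ring
    have hby : b ⬝ᵥ x.1 = x.2 * (b ⬝ᵥ (x.2⁻¹ • x.1)) := by
      conv_lhs => rw [hx1y]
      simp only [dotProduct, Finset.mul_sum]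
      exact Finset.sum_congr rfl fun i _ => by simp only [Pi.smul_apply, smul_eq_mul]; ring
    have hqval : qfAux A b (v + ε) x = x.2 ^ 2 * ((v + ε)
        - (A.mulVec (x.2⁻¹ • x.1) ⬝ᵥ A.mulVec (x.2⁻¹ • x.1) + b ⬝ᵥ (x.2⁻¹ • x.1))) := by
      unfold qfAux
      rw [hAy, hby]; ring
    rw [hqval]
    apply mul_pos (pow_pos hs 2)
    linarith
  obtain ⟨σ, hσ0, hσD⟩ := sigma_select D hDcomp (gfAux L) (qfAux A b (v + ε))
    hgf_cont hqf_cont hgf_nonneg hq_pos_of_g0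
  have hpf_nonneg : ∀ x, 0 ≤ pfAux S t x := fun x => Finset.sum_nonneg fun j _ => sq_nonneg _
  have hp_pos : ∀ x ∈ T, (fun x => σ * gfAux L x + qfAux A b (v + ε) x) x ≤ 0 →
      0 < pfAux S t x := by
    intro x hx hG
    rcases (hpf_nonneg x).lt_or_eq with h | h
    · exact h
    · exfalso
      have hxD : x ∈ D := by
        refine ⟨hx, fun j => ?_⟩
        have h1 := (Finset.sum_eq_zero_iff_of_nonneg
          (fun j _ => sq_nonneg (S.mulVec x.1 j - x.2 * t j))).mp h.symm j (Finset.mem_univ j)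
        have h2 := pow_eq_zero_iff (n := 2) (by norm_num) |>.mp h1
        linarith [sub_eq_zero.mp h2]
      exact absurd (hσD x hxD) (not_lt.mpr hG)
  obtain ⟨ρ, hρ0, hρT⟩ := rho_select T hTcomp (pfAux S t)
    (fun x => σ * gfAux L x + qfAux A b (v + ε) x) hpf_cont
    ((continuous_const.mul hgf_cont).add hqf_cont) hpf_nonneg hp_pos
  refine ⟨ρ, σ, fun ξ s hξ hs => ?_⟩
  have key : ∀ x : (Fin K → ℝ) × ℝ, (∀ i, 0 ≤ x.1 i) → 0 ≤ x.2 →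
      0 ≤ ρ * pfAux S t x + σ * gfAux L x + qfAux A b (v + ε) x := by
    intro x hx1 hx2
    by_cases hn : ((∑ i, x.1 i ^ 2) + x.2 ^ 2) = 0
    · have hx20 : x.2 = 0 := by
        nlinarith [Finset.sum_nonneg (fun i (_ : i ∈ Finset.univ) => sq_nonneg (x.1 i)),
          sq_nonneg x.2]
      have hx10 : x.1 = 0 := by
        funext i
        have hsum : (∑ i, x.1 i ^ 2) = 0 := by nlinarith [sq_nonneg x.2]
        have := (Finset.sum_eq_zero_iff_of_nonneg
          (fun i _ => sq_nonneg (x.1 i))).mp hsum i (Finset.mem_univ i)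
        exact pow_eq_zero_iff (n := 2) (by norm_num) |>.mp this
      have hpz : pfAux S t x = 0 := by simp [pfAux, hx10, hx20]
      have hgz : gfAux L x = 0 := by simp [gfAux, hx10]
      have hqz : qfAux A b (v + ε) x = 0 := by simp [qfAux, hx10, hx20]
      rw [hpz, hgz, hqz]; simp
    · have hnpos : 0 < (∑ i, x.1 i ^ 2) + x.2 ^ 2 :=
        lt_of_le_of_ne (by positivity) (Ne.symm hn)
      have hrpos : 0 < (Real.sqrt ((∑ i, x.1 i ^ 2) + x.2 ^ 2))⁻¹ :=
        inv_pos.mpr (Real.sqrt_pos.mpr hnpos)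
      generalize hrdef : (Real.sqrt ((∑ i, x.1 i ^ 2) + x.2 ^ 2))⁻¹ = r at hrpos
      have hr2 : r ^ 2 * ((∑ i, x.1 i ^ 2) + x.2 ^ 2) = 1 := by
        rw [← hrdef, inv_pow, Real.sq_sqrt hnpos.le, inv_mul_cancel₀ hn]
      have hx'T : ((r • x.1, r * x.2) : (Fin K → ℝ) × ℝ) ∈ T := by
        refine ⟨fun i => mul_nonneg hrpos.le (hx1 i), mul_nonneg hrpos.le hx2, ?_⟩
        have heq : (∑ i, (r • x.1, r * x.2).1 i ^ 2) + (r • x.1, r * x.2).2 ^ 2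
            = r ^ 2 * ((∑ i, x.1 i ^ 2) + x.2 ^ 2) := by
          simp only [Pi.smul_apply, smul_eq_mul]
          rw [mul_add, Finset.mul_sum]
          congr 1
          · exact Finset.sum_congr rfl fun i _ => by ring
          · ring
        rw [heq, hr2]
      have hpscale : pfAux S t (r • x.1, r * x.2) = r ^ 2 * pfAux S t x := by
        unfold pfAux
        simp only [mulVec_smul, Finset.mul_sum]
        exact Finset.sum_congr rfl fun j _ => by simp only [Pi.smul_apply, smul_eq_mul]; ring
      have hgscale : gfAux L (r • x.1, r * x.2) = r ^ 2 * gfAux L x := by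
        unfold gfAux
        simp only [Finset.mul_sum]
        refine Finset.sum_congr rfl fun ℓ _ => ?_
        by_cases h : (ℓ : ℕ) < L
        · simp only [if_pos h, Pi.smul_apply, smul_eq_mul]; ring
        · simp [h]
      have hqscale : qfAux A b (v + ε) (r • x.1, r * x.2) = r ^ 2 * qfAux A b (v + ε) x := by
        unfold qfAux
        have hA : ∑ i, (A.mulVec (r • x.1) i) ^ 2 = r ^ 2 * ∑ i, (A.mulVec x.1 i) ^ 2 := by
          rw [mulVec_smul, Finset.mul_sum]
          exact Finset.sum_congr rfl fun i _ => by simp only [Pi.smul_apply, smul_eq_mul]; ring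
        have hbs : b ⬝ᵥ (r • x.1) = r * (b ⬝ᵥ x.1) := by
          simp only [dotProduct, Finset.mul_sum, Pi.smul_apply, smul_eq_mul]
          exact Finset.sum_congr rfl fun i _ => by ring
        simp only [hA, hbs]; ring
      have h0 := hρT (r • x.1, r * x.2) hx'T
      rw [hpscale, hgscale, hqscale] at h0
      have h1 : 0 ≤ r ^ 2 * (ρ * pfAux S t x + σ * gfAux L x + qfAux A b (v + ε) x) := by
        linarith
      have hr2pos : 0 < r ^ 2 := pow_pos hrpos 2
      nlinarith [h1, hr2pos]
  exact key (ξ, s) hξ hs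

lemma weak_dual {J K M L : ℕ}
    (S : Matrix (Fin J) (Fin K) ℝ) (t : Fin J → ℝ)
    (A : Matrix (Fin M) (Fin K) ℝ) (b : Fin K → ℝ)
    (τ : ℝ) (ψ φ : Fin J → ℝ) (γ : Fin L → ℝ)
    (hcop : IsCopositive
      (fromBlocks
        (Sᵀ * diagonal φ * S - Aᵀ * A -
          diagonal (fun ℓ : Fin K => if h : (ℓ : ℕ) < L then γ ⟨ℓ, h⟩ else 0))
        (of fun i (_ : Unit) => (Sᵀ.mulVec ψ i - b i +
          (if h : (i : ℕ) < L then γ ⟨i, h⟩ else 0)) / 2)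
        (of fun (_ : Unit) j => (Sᵀ.mulVec ψ j - b j +
          (if h : (j : ℕ) < L then γ ⟨j, h⟩ else 0)) / 2)
        (of fun (_ : Unit) (_ : Unit) => τ)))
    (ξ : Fin K → ℝ) (hξ0 : ∀ i, 0 ≤ ξ i) (hfeas : S.mulVec ξ = t)
    (hbin : ∀ ℓ : Fin K, (ℓ : ℕ) < L → ξ ℓ = 0 ∨ ξ ℓ = 1) :
    A.mulVec ξ ⬝ᵥ A.mulVec ξ + b ⬝ᵥ ξ ≤ t ⬝ᵥ ψ + (fun j => t j * t j) ⬝ᵥ φ + τ := by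
  have hη : ∀ i, 0 ≤ Sum.elim ξ (fun _ : Unit => (1:ℝ)) i := by
    rintro (i | i)
    · exact hξ0 i
    · norm_num
  have h := hcop _ hη
  rw [quadM J K M S A b τ ψ φ
    (fun ℓ : Fin K => if h : (ℓ : ℕ) < L then γ ⟨ℓ, h⟩ else 0) ξ 1] at h
  rw [hfeas] at h
  have e1 : (∑ j, φ j * t j ^ 2) = (fun j => t j * t j) ⬝ᵥ φ := by
    simp only [dotProduct]
    exact Finset.sum_congr rfl fun j _ => by ring
  have e2 : ψ ⬝ᵥ t = t ⬝ᵥ ψ := dotProduct_comm _ _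
  have e3 : (∑ ℓ : Fin K, (if h : (ℓ : ℕ) < L then γ ⟨ℓ, h⟩ else 0) * ξ ℓ ^ 2)
      = (fun ℓ : Fin K => if h : (ℓ : ℕ) < L then γ ⟨ℓ, h⟩ else 0) ⬝ᵥ ξ := by
    simp only [dotProduct]
    refine Finset.sum_congr rfl fun ℓ _ => ?_
    by_cases h : (ℓ : ℕ) < L
    · rcases hbin ℓ h with h0 | h1
      · rw [h0]; ring
      · rw [h1]; ring
    · simp [h]
  rw [e1, e2, e3] at h
  linarith

lemma cop_construct {J K M L : ℕ}
    (S : Matrix (Fin J) (Fin K) ℝ) (t : Fin J → ℝ)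
    (A : Matrix (Fin M) (Fin K) ℝ) (b : Fin K → ℝ) (ρ σ c : ℝ)
    (hF : ∀ (ξ : Fin K → ℝ) (s : ℝ), (∀ i, 0 ≤ ξ i) → 0 ≤ s →
      0 ≤ ρ * (∑ j, (S.mulVec ξ j - s * t j) ^ 2)
        + σ * (∑ ℓ : Fin K, if (ℓ : ℕ) < L then ξ ℓ * (s - ξ ℓ) else 0)
        + (-(∑ i, (A.mulVec ξ i) ^ 2) - s * (b ⬝ᵥ ξ) + c * s ^ 2)) :
    IsCopositive
      (fromBlocks
        (Sᵀ * diagonal (fun _ : Fin J => ρ) * S - Aᵀ * A -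
          diagonal (fun ℓ : Fin K => if h : (ℓ : ℕ) < L then (fun _ : Fin L => σ) ⟨ℓ, h⟩ else 0))
        (of fun i (_ : Unit) => (Sᵀ.mulVec (fun j => -(2 * ρ * t j)) i - b i +
          (if h : (i : ℕ) < L then (fun _ : Fin L => σ) ⟨i, h⟩ else 0)) / 2)
        (of fun (_ : Unit) j => (Sᵀ.mulVec (fun j' => -(2 * ρ * t j')) j - b j +
          (if h : (j : ℕ) < L then (fun _ : Fin L => σ) ⟨j, h⟩ else 0)) / 2)
        (of fun (_ : Unit) (_ : Unit) => ρ * (t ⬝ᵥ t) + c)) := by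
  intro η hη
  have hηeq : η = Sum.elim (fun i => η (Sum.inl i)) (fun _ : Unit => η (Sum.inr ())) := by
    funext i
    rcases i with i | u
    · rfl
    · cases u; rfl
  set ξ : Fin K → ℝ := fun i => η (Sum.inl i) with hxi
  set s : ℝ := η (Sum.inr ()) with hsdef
  rw [hηeq]
  rw [quadM J K M S A b (ρ * (t ⬝ᵥ t) + c) (fun j => -(2 * ρ * t j)) (fun _ => ρ)
    (fun ℓ : Fin K => if h : (ℓ : ℕ) < L then (fun _ : Fin L => σ) ⟨ℓ, h⟩ else 0) ξ s]
  have hξ0 : ∀ i, 0 ≤ ξ i := fun i => hη (Sum.inl i)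
  have hs0 : 0 ≤ s := hη (Sum.inr ())
  have main := hF ξ s hξ0 hs0
  -- identify the two expressions
  have e1 : ∑ j, (S.mulVec ξ j - s * t j) ^ 2
      = (∑ j, (S.mulVec ξ j) ^ 2) - 2 * s * (∑ j, t j * S.mulVec ξ j)
        + s ^ 2 * ∑ j, t j * t j := by
    rw [Finset.mul_sum, Finset.mul_sum, ← Finset.sum_sub_distrib, ← Finset.sum_add_distrib]
    exact Finset.sum_congr rfl fun j _ => by ring
  have e2 : σ * (∑ ℓ : Fin K, if (ℓ : ℕ) < L then ξ ℓ * (s - ξ ℓ) else 0)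
      = -(∑ ℓ : Fin K, (if h : (ℓ : ℕ) < L then (fun _ : Fin L => σ) ⟨ℓ, h⟩ else 0) * ξ ℓ ^ 2)
        + s * (∑ ℓ : Fin K, (if h : (ℓ : ℕ) < L then (fun _ : Fin L => σ) ⟨ℓ, h⟩ else 0) * ξ ℓ) := by
    rw [Finset.mul_sum, Finset.mul_sum, ← Finset.sum_neg_distrib, ← Finset.sum_add_distrib]
    refine Finset.sum_congr rfl fun ℓ _ => ?_
    by_cases h : (ℓ : ℕ) < L
    · simp only [if_pos h, dif_pos h]; ring
    · simp only [if_neg h, dif_neg h]; ring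
  have e3 : A.mulVec ξ ⬝ᵥ A.mulVec ξ = ∑ i, (A.mulVec ξ i) ^ 2 := by
    simp only [dotProduct, sq]
  have e4 : (fun j => -(2 * ρ * t j)) ⬝ᵥ S.mulVec ξ = -(2 * ρ) * ∑ j, t j * S.mulVec ξ j := by
    simp only [dotProduct, Finset.mul_sum]
    exact Finset.sum_congr rfl fun j _ => by ring
  have e5 : t ⬝ᵥ t = ∑ j, t j * t j := rfl
  have e6 : (fun ℓ : Fin K => if h : (ℓ : ℕ) < L then (fun _ : Fin L => σ) ⟨ℓ, h⟩ else 0) ⬝ᵥ ξ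
      = ∑ ℓ : Fin K, (if h : (ℓ : ℕ) < L then (fun _ : Fin L => σ) ⟨ℓ, h⟩ else 0) * ξ ℓ := rfl
  have e7 : ∑ j, ρ * (S.mulVec ξ j) ^ 2 = ρ * ∑ j, (S.mulVec ξ j) ^ 2 := by
    rw [Finset.mul_sum]
  rw [e1, e2] at main
  rw [e3, e4, e5, e6, e7]
  exact main.trans (le_of_eq (by ring))

/-- Strong duality between the mixed-binary quadratic program and its dual copositive
program (values taken in the extended reals). -/
theorem copositive_strong_duality
    (J K M L : ℕ) (hL : L ≤ K)
    (S : Matrix (Fin J) (Fin K) ℝ) (t : Fin J → ℝ)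
    (A : Matrix (Fin M) (Fin K) ℝ) (b : Fin K → ℝ)
    (hne : ∃ ξ : Fin K → ℝ, (∀ i, 0 ≤ ξ i) ∧ S.mulVec ξ = t ∧
      ∀ ℓ : Fin K, (ℓ : ℕ) < L → ξ ℓ = 0 ∨ ξ ℓ = 1)
    (hrec : ∀ ξ : Fin K → ℝ, (∀ i, 0 ≤ ξ i) → S.mulVec ξ = 0 → ξ = 0)
    (hbd : ∀ ξ : Fin K → ℝ, (∀ i, 0 ≤ ξ i) → S.mulVec ξ = t →
      ∀ ℓ : Fin K, (ℓ : ℕ) < L → ξ ℓ ≤ 1) :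
    sSup {z : EReal | ∃ ξ : Fin K → ℝ, (∀ i, 0 ≤ ξ i) ∧ S.mulVec ξ = t ∧
        (∀ ℓ : Fin K, (ℓ : ℕ) < L → ξ ℓ = 0 ∨ ξ ℓ = 1) ∧
        z = ((A.mulVec ξ ⬝ᵥ A.mulVec ξ + b ⬝ᵥ ξ : ℝ) : EReal)} =
    sInf {z : EReal | ∃ (τ : ℝ) (ψ φ : Fin J → ℝ) (γ : Fin L → ℝ),
        IsCopositive
          (fromBlocks
            (Sᵀ * diagonal φ * S - Aᵀ * A -
              diagonal (fun ℓ : Fin K => if h : (ℓ : ℕ) < L then γ ⟨ℓ, h⟩ else 0))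
            (of fun i (_ : Unit) => (Sᵀ.mulVec ψ i - b i +
              (if h : (i : ℕ) < L then γ ⟨i, h⟩ else 0)) / 2)
            (of fun (_ : Unit) j => (Sᵀ.mulVec ψ j - b j +
              (if h : (j : ℕ) < L then γ ⟨j, h⟩ else 0)) / 2)
            (of fun (_ : Unit) (_ : Unit) => τ)) ∧
        z = ((t ⬝ᵥ ψ + (fun j => t j * t j) ⬝ᵥ φ + τ : ℝ) : EReal)} := by
  obtain ⟨v, ⟨ξs, hξsfeas, hξsval⟩, hmax⟩ := primal_attain S t A b hne hrec
  have hSupEq : sSup {z : EReal | ∃ ξ : Fin K → ℝ, (∀ i, 0 ≤ ξ i) ∧ S.mulVec ξ = t ∧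
      (∀ ℓ : Fin K, (ℓ : ℕ) < L → ξ ℓ = 0 ∨ ξ ℓ = 1) ∧
      z = ((A.mulVec ξ ⬝ᵥ A.mulVec ξ + b ⬝ᵥ ξ : ℝ) : EReal)} = (v : EReal) := by
    apply le_antisymm
    · apply sSup_le
      rintro z ⟨ξ, h1, h2, h3, rfl⟩
      exact EReal.coe_le_coe_iff.mpr (hmax ξ h1 h2 h3)
    · apply le_sSup
      exact ⟨ξs, hξsfeas.1, hξsfeas.2.1, hξsfeas.2.2, by rw [hξsval]⟩
  set SD : Set EReal := {z : EReal | ∃ (τ : ℝ) (ψ φ : Fin J → ℝ) (γ : Fin L → ℝ),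
      IsCopositive
        (fromBlocks
          (Sᵀ * diagonal φ * S - Aᵀ * A -
            diagonal (fun ℓ : Fin K => if h : (ℓ : ℕ) < L then γ ⟨ℓ, h⟩ else 0))
          (of fun i (_ : Unit) => (Sᵀ.mulVec ψ i - b i +
            (if h : (i : ℕ) < L then γ ⟨i, h⟩ else 0)) / 2)
          (of fun (_ : Unit) j => (Sᵀ.mulVec ψ j - b j +
            (if h : (j : ℕ) < L then γ ⟨j, h⟩ else 0)) / 2)
          (of fun (_ : Unit) (_ : Unit) => τ)) ∧
      z = ((t ⬝ᵥ ψ + (fun j => t j * t j) ⬝ᵥ φ + τ : ℝ) : EReal)} with hSDdef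
  have hInfLB : (v : EReal) ≤ sInf SD := by
    apply le_sInf
    rintro z ⟨τ, ψ, φ, γ, hcop, rfl⟩
    apply EReal.coe_le_coe_iff.mpr
    calc v = A.mulVec ξs ⬝ᵥ A.mulVec ξs + b ⬝ᵥ ξs := hξsval.symm
      _ ≤ _ := weak_dual S t A b τ ψ φ γ hcop ξs hξsfeas.1 hξsfeas.2.1 hξsfeas.2.2
  have hInfUB : ∀ ε : ℝ, 0 < ε → sInf SD ≤ ((v + ε : ℝ) : EReal) := by
    intro ε hε
    apply sInf_le
    obtain ⟨ρ, σ, hF⟩ := exists_rho_sigma S t A b hrec hbd v ε hε hmax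
    refine ⟨ρ * (t ⬝ᵥ t) + (v + ε), fun j => -(2 * ρ * t j), fun _ => ρ, fun _ => σ, ?_, ?_⟩
    · exact cop_construct S t A b ρ σ (v + ε) hF
    · apply (EReal.coe_eq_coe_iff.mpr _).symm
      have h1 : t ⬝ᵥ (fun j => -(2 * ρ * t j)) = -(2 * ρ) * (t ⬝ᵥ t) := by
        simp only [dotProduct, Finset.mul_sum]
        exact Finset.sum_congr rfl fun j _ => by ring
      have h2 : (fun j => t j * t j) ⬝ᵥ (fun _ : Fin J => ρ) = ρ * (t ⬝ᵥ t) := by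
        simp only [dotProduct, Finset.mul_sum]
        exact Finset.sum_congr rfl fun j _ => by ring
      rw [h1, h2]
      ring
  have hInfEq : sInf SD = (v : EReal) := by
    apply le_antisymm
    · by_contra h
      push_neg at h
      obtain ⟨r, hr1, hr2⟩ := EReal.exists_between_coe_real h
      have hεpos : 0 < r - v := sub_pos.mpr (EReal.coe_lt_coe_iff.mp hr1)
      have hle := hInfUB (r - v) hεpos
      rw [show v + (r - v) = r by ring] at hle
      exact absurd (hle.trans_lt hr2) (lt_irrefl _)
    · exact hInfLB
  rw [hSupEq]
  exact hInfEq.symm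
end

section
/- Let S ∈ ℝ^{J×K}, t ∈ ℝ^J, A ∈ ℝ^{M×K}, b ∈ ℝ^K, and let Ξ = { ξ ∈ ℝ^K : ξ ≥ 0, Sξ = t }. Let r > 0, Q ∈ ℝ^{K×K}, and c ∈ ℝ^K be such that Ξ ⊆ { ξ ∈ ℝ^K : ‖Q(ξ − c)‖ ≤ r }. Suppose κ ∈ ℝ, ρ ≥ 0, θ ∈ ℝ^J, and η ∈ ℝ^K with η ≥ 0 are such that the (K+1)×(K+1) block matrix [[ρQᵀQ − AᵀA, ½(Sᵀθ − b − η − 2ρQᵀQc)], [½(Sᵀθ − b − η − 2ρQᵀQc)ᵀ, κ]] is positive semidefinite. Then every ξ ∈ Ξ satisfies ‖Aξ‖² + bᵀξ ≤ tᵀθ + ρr² − ρ‖Qc‖² + κ. -/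
open Matrix

/-- Weak duality for the approximate S-lemma: a feasible dual solution of the SDP
upper-bounds the quadratic objective over the polytope. -/
theorem approximate_S_lemma_bound
    (J K M : ℕ)
    (S : Matrix (Fin J) (Fin K) ℝ) (t : Fin J → ℝ)
    (A : Matrix (Fin M) (Fin K) ℝ) (b : Fin K → ℝ)
    (r : ℝ) (hr : 0 < r)
    (Q : Matrix (Fin K) (Fin K) ℝ) (c : Fin K → ℝ)
    (hball : ∀ ξ : Fin K → ℝ, (∀ i, 0 ≤ ξ i) → S.mulVec ξ = t →
      Q.mulVec (ξ - c) ⬝ᵥ Q.mulVec (ξ - c) ≤ r ^ 2)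
    (κ : ℝ) (ρ : ℝ) (hρ : 0 ≤ ρ) (θ : Fin J → ℝ) (η : Fin K → ℝ) (hη : ∀ i, 0 ≤ η i)
    (hpsd : (fromBlocks
        (ρ • (Qᵀ * Q) - Aᵀ * A)
        (of fun i (_ : Unit) =>
          (Sᵀ.mulVec θ i - b i - η i - 2 * ρ * (Qᵀ * Q).mulVec c i) / 2)
        (of fun (_ : Unit) j =>
          (Sᵀ.mulVec θ j - b j - η j - 2 * ρ * (Qᵀ * Q).mulVec c j) / 2)
        (of fun (_ : Unit) (_ : Unit) => κ)).PosSemidef) :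
    ∀ ξ : Fin K → ℝ, (∀ i, 0 ≤ ξ i) → S.mulVec ξ = t →
      A.mulVec ξ ⬝ᵥ A.mulVec ξ + b ⬝ᵥ ξ ≤
        t ⬝ᵥ θ + ρ * r ^ 2 - ρ * (Q.mulVec c ⬝ᵥ Q.mulVec c) + κ := by
  intro ξ hξ hSξ
  set v : Fin K → ℝ := fun i =>
    (Sᵀ.mulVec θ i - b i - η i - 2 * ρ * (Qᵀ * Q).mulVec c i) / 2 with hv
  -- quadratic form at (ξ, 1)
  have h0 : (0:ℝ) ≤ ξ ⬝ᵥ ((ρ • (Qᵀ * Q) - Aᵀ * A).mulVec ξ) + 2 * (v ⬝ᵥ ξ) + κ := by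
    have := hpsd.dotProduct_mulVec_nonneg (Sum.elim ξ (fun _ : Unit => (1:ℝ)))
    simp only [RCLike.star_def, star_trivial, fromBlocks_mulVec,
      sumElim_dotProduct_sumElim, Sum.elim_comp_inl, Sum.elim_comp_inr] at this
    have e1 : (of fun i (_ : Unit) => v i).mulVec (fun _ : Unit => (1:ℝ)) = v := by
      funext i; simp [mulVec, dotProduct]
    have e2 : (of fun (_ : Unit) j => v j).mulVec ξ = fun _ : Unit => v ⬝ᵥ ξ := by
      funext u; simp [mulVec, dotProduct]
    have e3 : (of fun (_ : Unit) (_ : Unit) => κ).mulVec (fun _ : Unit => (1:ℝ))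
        = fun _ : Unit => κ := by
      funext u; simp [mulVec, dotProduct]
    rw [e1, e2, e3] at this
    simp only [dotProduct_add, dotProduct, Finset.univ_unique, Finset.sum_singleton,
      Pi.add_apply, mul_add, Finset.sum_add_distrib, one_mul] at this
    have comm : ξ ⬝ᵥ v = v ⬝ᵥ ξ := dotProduct_comm _ _
    simp only [dotProduct] at comm ⊢
    linarith [this]
  -- identities
  have aux : ∀ (m : ℕ) (B : Matrix (Fin m) (Fin K) ℝ) (x y : Fin K → ℝ),
      x ⬝ᵥ (Bᵀ * B).mulVec y = B.mulVec x ⬝ᵥ B.mulVec y := by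
    intro m B x y
    rw [← mulVec_mulVec, dotProduct_mulVec, vecMul_transpose]
  have hq : ξ ⬝ᵥ ((ρ • (Qᵀ * Q) - Aᵀ * A).mulVec ξ)
      = ρ * (Q.mulVec ξ ⬝ᵥ Q.mulVec ξ) - A.mulVec ξ ⬝ᵥ A.mulVec ξ := by
    rw [sub_mulVec, dotProduct_sub, smul_mulVec, dotProduct_smul,
      aux K Q, aux M A]
    simp [smul_eq_mul]
  have hS : Sᵀ.mulVec θ ⬝ᵥ ξ = t ⬝ᵥ θ := by
    rw [mulVec_transpose, ← dotProduct_mulVec, hSξ, dotProduct_comm]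
  have hQc : (Qᵀ * Q).mulVec c ⬝ᵥ ξ = Q.mulVec c ⬝ᵥ Q.mulVec ξ := by
    rw [dotProduct_comm, aux K Q, dotProduct_comm]
  have hv' : v = (1/2 : ℝ) • (Sᵀ.mulVec θ - b - η - (2*ρ) • ((Qᵀ * Q).mulVec c)) := by
    funext i
    simp only [hv, Pi.smul_apply, Pi.sub_apply, smul_eq_mul]
    ring
  have hvξ : v ⬝ᵥ ξ
      = (t ⬝ᵥ θ - b ⬝ᵥ ξ - η ⬝ᵥ ξ - 2 * ρ * (Q.mulVec c ⬝ᵥ Q.mulVec ξ)) / 2 := by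
    rw [hv', smul_dotProduct, sub_dotProduct, sub_dotProduct, sub_dotProduct,
      smul_dotProduct, hS, hQc, smul_eq_mul, smul_eq_mul]
    ring
  have hηξ : 0 ≤ η ⬝ᵥ ξ := Finset.sum_nonneg fun i _ => mul_nonneg (hη i) (hξ i)
  have hb := hball ξ hξ hSξ
  have hexp : Q.mulVec (ξ - c) ⬝ᵥ Q.mulVec (ξ - c)
      = Q.mulVec ξ ⬝ᵥ Q.mulVec ξ - 2 * (Q.mulVec c ⬝ᵥ Q.mulVec ξ)
        + Q.mulVec c ⬝ᵥ Q.mulVec c := by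
    rw [mulVec_sub, sub_dotProduct, dotProduct_sub, dotProduct_sub]
    rw [dotProduct_comm (Q.mulVec ξ) (Q.mulVec c)]
    ring
  rw [hq, hvξ] at h0
  nlinarith [mul_le_mul_of_nonneg_left hb hρ, hexp]
end

section
/- Let S ∈ ℝ^{J×K}, t ∈ ℝ^J, A ∈ ℝ^{M×K}, b ∈ ℝ^K, and let Ξ = { ξ ∈ ℝ^K : ξ ≥ 0, Sξ = t }. Let r > 0, Q ∈ ℝ^{K×K}, and c ∈ ℝ^K be such that Ξ ⊆ { ξ ∈ ℝ^K : ‖Q(ξ − c)‖ ≤ r }. Suppose τ ∈ ℝ, λ ≥ 0, h ≥ 0, ψ, φ ∈ ℝ^J, F ∈ ℝ^{K×K} with F ≥ 0 entrywise, and g ∈ ℝ^K with g ≥ 0 are such that [[λQᵀQ + Sᵀ diag(φ) S − AᵀA, ½(Sᵀψ − b − 2λQᵀQc)], [½(Sᵀψ − b − 2λQᵀQc)ᵀ, τ]] − [[F, g],[gᵀ, h]] is positive semidefinite. Then every ξ ∈ Ξ satisfies ‖Aξ‖² + bᵀξ ≤ tᵀψ + (t∘t)ᵀφ + λr² − λ‖Qc‖²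 + τ. -/
open Matrix

lemma quad_block_s13 {n : Type*} [Fintype n] (P : Matrix n n ℝ) (q : n → ℝ) (τ : ℝ) (x : n → ℝ) :
    (Sum.elim x fun (_ : Unit) => (1:ℝ)) ⬝ᵥ
      (fromBlocks P (of fun i (_ : Unit) => q i) (of fun (_ : Unit) j => q j)
        (of fun (_ : Unit) (_ : Unit) => τ)) *ᵥ (Sum.elim x fun _ => 1) =
      x ⬝ᵥ P *ᵥ x + 2 * (q ⬝ᵥ x) + τ := by
  rw [fromBlocks_mulVec, dotProduct_block]
  have hB : (of fun i (_ : Unit) => q i) *ᵥ (fun _ => (1:ℝ)) = q := by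
    funext i; simp [mulVec, dotProduct]
  have hC : (of fun (_ : Unit) j => q j) *ᵥ x = fun _ => q ⬝ᵥ x := by
    funext u; simp [mulVec, dotProduct]
  have hD : (of fun (_ : Unit) (_ : Unit) => τ) *ᵥ (fun _ => (1:ℝ)) = fun _ => τ := by
    funext u; simp [mulVec, dotProduct]
  rw [Sum.elim_comp_inl, Sum.elim_comp_inr, Sum.elim_comp_inl, Sum.elim_comp_inr,
    hB, hC, hD, dotProduct_add]
  have h1 : (fun (_ : Unit) => (1:ℝ)) ⬝ᵥ ((fun _ => q ⬝ᵥ x) + fun _ => τ) = q ⬝ᵥ x + τ := by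
    simp [dotProduct]
  rw [h1, dotProduct_comm x q]
  ring

/-- Weak duality for the `C⁰` (PSD + nonnegative) inner approximation of the copositive
program: a feasible solution upper-bounds the quadratic objective over the polytope. -/
theorem C0_approximation_bound
    (J K M : ℕ)
    (S : Matrix (Fin J) (Fin K) ℝ) (t : Fin J → ℝ)
    (A : Matrix (Fin M) (Fin K) ℝ) (b : Fin K → ℝ)
    (r : ℝ) (hr : 0 < r)
    (Q : Matrix (Fin K) (Fin K) ℝ) (c : Fin K → ℝ)
    (hball : ∀ ξ : Fin K → ℝ, (∀ i, 0 ≤ ξ i) → S.mulVec ξ = t →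
      Q.mulVec (ξ - c) ⬝ᵥ Q.mulVec (ξ - c) ≤ r ^ 2)
    (τ : ℝ) (lam : ℝ) (hlam : 0 ≤ lam) (h : ℝ) (hh : 0 ≤ h)
    (ψ φ : Fin J → ℝ)
    (F : Matrix (Fin K) (Fin K) ℝ) (hF : ∀ i j, 0 ≤ F i j)
    (g : Fin K → ℝ) (hg : ∀ i, 0 ≤ g i)
    (hpsd : (fromBlocks
        (lam • (Qᵀ * Q) + Sᵀ * diagonal φ * S - Aᵀ * A)
        (of fun i (_ : Unit) =>
          (Sᵀ.mulVec ψ i - b i - 2 * lam * (Qᵀ * Q).mulVec c i) / 2)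
        (of fun (_ : Unit) j =>
          (Sᵀ.mulVec ψ j - b j - 2 * lam * (Qᵀ * Q).mulVec c j) / 2)
        (of fun (_ : Unit) (_ : Unit) => τ) -
      fromBlocks F
        (of fun i (_ : Unit) => g i)
        (of fun (_ : Unit) j => g j)
        (of fun (_ : Unit) (_ : Unit) => h)).PosSemidef) :
    ∀ ξ : Fin K → ℝ, (∀ i, 0 ≤ ξ i) → S.mulVec ξ = t →
      A.mulVec ξ ⬝ᵥ A.mulVec ξ + b ⬝ᵥ ξ ≤
        t ⬝ᵥ ψ + (fun j => t j * t j) ⬝ᵥ φ + lam * r ^ 2 -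
          lam * (Q.mulVec c ⬝ᵥ Q.mulVec c) + τ := by
  intro ξ hξ hSξ
  set q : Fin K → ℝ :=
    fun i => (Sᵀ.mulVec ψ i - b i - 2 * lam * (Qᵀ * Q).mulVec c i) / 2 with hq
  set z : Fin K ⊕ Unit → ℝ := Sum.elim ξ fun _ => 1 with hz
  have h0 := hpsd.dotProduct_mulVec_nonneg z
  rw [show (star z) = z from rfl, sub_mulVec, dotProduct_sub] at h0
  rw [hz, quad_block_s13, quad_block_s13] at h0
  -- nonnegativity of the F-block quadratic form
  have hFq : 0 ≤ ξ ⬝ᵥ F *ᵥ ξ + 2 * (g ⬝ᵥ ξ) + h := by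
    have h1 : 0 ≤ ξ ⬝ᵥ F *ᵥ ξ := by
      simp only [dotProduct, mulVec]
      exact Finset.sum_nonneg fun i _ => mul_nonneg (hξ i)
        (Finset.sum_nonneg fun j _ => mul_nonneg (hF i j) (hξ j))
    have h2 : 0 ≤ g ⬝ᵥ ξ :=
      Finset.sum_nonneg fun i _ => mul_nonneg (hg i) (hξ i)
    linarith
  have key : 0 ≤ ξ ⬝ᵥ (lam • (Qᵀ * Q) + Sᵀ * diagonal φ * S - Aᵀ * A) *ᵥ ξ
      + 2 * (q ⬝ᵥ ξ) + τ := by linarith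
  -- expand the P block
  have hPexp : ξ ⬝ᵥ (lam • (Qᵀ * Q) + Sᵀ * diagonal φ * S - Aᵀ * A) *ᵥ ξ
      = lam * (Q *ᵥ ξ ⬝ᵥ Q *ᵥ ξ) + (fun j => t j * t j) ⬝ᵥ φ - A *ᵥ ξ ⬝ᵥ A *ᵥ ξ := by
    rw [sub_mulVec, add_mulVec, dotProduct_sub, dotProduct_add, smul_mulVec,
      dotProduct_smul]
    have e1 : ξ ⬝ᵥ (Qᵀ * Q) *ᵥ ξ = Q *ᵥ ξ ⬝ᵥ Q *ᵥ ξ := by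
      rw [← mulVec_mulVec, dotProduct_mulVec, vecMul_transpose]
    have e2 : ξ ⬝ᵥ (Aᵀ * A) *ᵥ ξ = A *ᵥ ξ ⬝ᵥ A *ᵥ ξ := by
      rw [← mulVec_mulVec, dotProduct_mulVec, vecMul_transpose]
    have e3 : ξ ⬝ᵥ (Sᵀ * diagonal φ * S) *ᵥ ξ = (fun j => t j * t j) ⬝ᵥ φ := by
      rw [← mulVec_mulVec, ← mulVec_mulVec, dotProduct_mulVec, vecMul_transpose, hSξ]
      simp [dotProduct, mulVec_diagonal, mul_comm, mul_assoc, mul_left_comm]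
    rw [e1, e2, e3]; simp [smul_eq_mul]
  -- expand the q term
  have hqexp : 2 * (q ⬝ᵥ ξ) = t ⬝ᵥ ψ - b ⬝ᵥ ξ - 2 * lam * (Q *ᵥ c ⬝ᵥ Q *ᵥ ξ) := by
    have e4 : Sᵀ *ᵥ ψ ⬝ᵥ ξ = t ⬝ᵥ ψ := by
      rw [mulVec_transpose, ← dotProduct_mulVec, hSξ, dotProduct_comm]
    have e5 : (Qᵀ * Q) *ᵥ c ⬝ᵥ ξ = Q *ᵥ c ⬝ᵥ Q *ᵥ ξ := by
      rw [← mulVec_mulVec, mulVec_transpose, ← dotProduct_mulVec]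
    have estep : 2 * (q ⬝ᵥ ξ)
        = Sᵀ *ᵥ ψ ⬝ᵥ ξ - b ⬝ᵥ ξ - 2 * lam * ((Qᵀ * Q) *ᵥ c ⬝ᵥ ξ) := by
      simp only [hq, dotProduct, Finset.mul_sum]
      rw [← Finset.sum_sub_distrib, ← Finset.sum_sub_distrib]
      exact Finset.sum_congr rfl fun i _ => by ring
    rw [estep, e4, e5]
  -- the ball bound
  have hb := hball ξ hξ hSξ
  have hexp : Q *ᵥ (ξ - c) ⬝ᵥ Q *ᵥ (ξ - c)
      = Q *ᵥ ξ ⬝ᵥ Q *ᵥ ξ - 2 * (Q *ᵥ c ⬝ᵥ Q *ᵥ ξ) + Q *ᵥ c ⬝ᵥ Q *ᵥ c := by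
    rw [mulVec_sub, dotProduct_sub, sub_dotProduct, sub_dotProduct,
      dotProduct_comm (Q *ᵥ ξ) (Q *ᵥ c)]
    ring
  have hball' : Q *ᵥ ξ ⬝ᵥ Q *ᵥ ξ - 2 * (Q *ᵥ c ⬝ᵥ Q *ᵥ ξ)
      ≤ r ^ 2 - Q *ᵥ c ⬝ᵥ Q *ᵥ c := by linarith
  have hlamball := mul_le_mul_of_nonneg_left hball' hlam
  rw [hPexp, hqexp] at key
  nlinarith [key, hlamball]
end

section
/- Let P ∈ ℝ^{p×n} be a matrix such that PᵀP is positive definite, let W ∈ ℝ^{T×n}, u ∈ ℝ^n, and v ∈ ℝ^T, and assume the set { y ∈ ℝ^n : Wy ≥ v } is nonempty. Then strong duality holds for the convex quadratic program with linear constraints: inf{ ‖Py‖² + uᵀy : y ∈ ℝ^n, Wy ≥ v } = sup{ vᵀθ − ¼ (Wᵀθ − u)ᵀ (PᵀP)⁻¹ (Wᵀθ − u) : θ ∈ ℝ^T, θ ≥ 0 }, and both values are finite. -/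
open Matrix Filter
open scoped InnerProductSpace

section helpers
variable {n m : ℕ}

/-- coordinate functions on matrices/vectors are continuous -/
lemma cont_mulVec_apply (A : Matrix (Fin m) (Fin n) ℝ) (i : Fin m) :
    Continuous fun y : Fin n → ℝ => A.mulVec y i := by
  simp only [Matrix.mulVec, dotProduct]
  exact continuous_finset_sum _ fun j _ => continuous_const.mul (continuous_apply j)

lemma cont_dot_left (u : Fin n → ℝ) : Continuous fun y : Fin n → ℝ => u ⬝ᵥ y := by
  simp only [dotProduct]
  exact continuous_finset_sum _ fun j _ => continuous_const.mul (continuous_apply j)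

/-- symmetric swap -/
lemma dot_swap {Q : Matrix (Fin n) (Fin n) ℝ} (hs : Qᵀ = Q) (a b : Fin n → ℝ) :
    a ⬝ᵥ Q.mulVec b = b ⬝ᵥ Q.mulVec a := by
  rw [Matrix.dotProduct_mulVec, ← Matrix.mulVec_transpose, hs, dotProduct_comm]

lemma dot_transpose (W : Matrix (Fin m) (Fin n) ℝ) (y : Fin n → ℝ) (θ : Fin m → ℝ) :
    y ⬝ᵥ Wᵀ.mulVec θ = W.mulVec y ⬝ᵥ θ := by
  rw [Matrix.dotProduct_mulVec, Matrix.vecMul_transpose]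

end helpers

section min
variable {n p T : ℕ}

lemma exists_minimizer (S : Set (Fin n → ℝ)) (hS : IsClosed S) (y₀ : Fin n → ℝ) (hy₀ : y₀ ∈ S)
    (f : (Fin n → ℝ) → ℝ) (hf : Continuous f)
    (hcoer : ∃ R : ℝ, ∀ y, f y ≤ f y₀ → ‖y‖ ≤ R) :
    ∃ y ∈ S, ∀ z ∈ S, f y ≤ f z := by
  obtain ⟨R, hR⟩ := hcoer
  have hKc : IsCompact (S ∩ f ⁻¹' Set.Iic (f y₀)) := by
    refine (isCompact_closedBall (0 : Fin n → ℝ) R).of_isClosed_subset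
      (hS.inter (isClosed_Iic.preimage hf)) ?_
    rintro y ⟨-, hy⟩
    simpa [Metric.mem_closedBall, dist_zero_right] using hR y hy
  obtain ⟨y, hyK, hmin⟩ := hKc.exists_isMinOn ⟨y₀, hy₀, by simp⟩ hf.continuousOn
  refine ⟨y, hyK.1, fun z hz => ?_⟩
  by_cases h : f z ≤ f y₀
  · exact hmin ⟨hz, h⟩
  · exact le_trans (hmin ⟨hy₀, by simp⟩) (not_le.1 h).le

lemma coercive_bound (P : Matrix (Fin p) (Fin n) ℝ) (hP : (Pᵀ * P).PosDef) (u : Fin n → ℝ)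
    (B : ℝ) :
    ∃ R : ℝ, ∀ y : Fin n → ℝ, P.mulVec y ⬝ᵥ P.mulVec y + u ⬝ᵥ y ≤ B → ‖y‖ ≤ R := by
  -- P is injective hence antilipschitz
  have hker : LinearMap.ker (Matrix.mulVecLin P) = ⊥ := by
    rw [LinearMap.ker_eq_bot]
    intro a b hab
    by_contra hne
    have h0 : a - b ≠ 0 := sub_ne_zero.2 hne
    have := hP.dotProduct_mulVec_pos h0
    have hz : P.mulVec (a - b) = 0 := by
      simp only [Matrix.mulVec_sub]
      simpa [Matrix.mulVecLin_apply, sub_eq_zero] using hab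
    rw [star_trivial] at this
    rw [show ((Pᵀ * P).mulVec (a-b)) = Pᵀ.mulVec (P.mulVec (a-b)) by
      rw [Matrix.mulVec_mulVec]] at this
    rw [hz] at this
    simp at this
  obtain ⟨K, hK0, hK⟩ := (Matrix.mulVecLin P).exists_antilipschitzWith hker
  -- ‖y‖ ≤ K * ‖P.mulVec y‖
  have hyP : ∀ y : Fin n → ℝ, ‖y‖ ≤ (K : ℝ) * ‖P.mulVec y‖ := by
    intro y
    have := hK.le_mul_dist y 0
    simpa [Matrix.mulVecLin_apply, dist_zero_right] using this
  -- ‖w‖ ^ 2 ≤ w ⬝ᵥ w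
  have hnorm_sq : ∀ (w : Fin p → ℝ), ‖w‖ ^ 2 ≤ w ⬝ᵥ w := by
    intro w
    have hw : 0 ≤ w ⬝ᵥ w := Finset.sum_nonneg fun i _ => mul_self_nonneg _
    have : ‖w‖ ≤ Real.sqrt (w ⬝ᵥ w) := by
      refine (pi_norm_le_iff_of_nonneg (Real.sqrt_nonneg _)).2 fun i => ?_
      rw [Real.norm_eq_abs]
      refine Real.abs_le_sqrt ?_
      have := Finset.single_le_sum (f := fun j => w j * w j)
        (fun j _ => mul_self_nonneg _) (Finset.mem_univ i)
      simpa [dotProduct, sq] using this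
    calc ‖w‖ ^ 2 ≤ Real.sqrt (w ⬝ᵥ w) ^ 2 := by
            exact pow_le_pow_left₀ (norm_nonneg _) this 2
      _ = w ⬝ᵥ w := Real.sq_sqrt hw
  -- u ⬝ᵥ y ≥ -C‖y‖
  set C : ℝ := ∑ i, |u i| with hC
  have hC0 : 0 ≤ C := Finset.sum_nonneg fun i _ => abs_nonneg _
  have hu : ∀ y : Fin n → ℝ, -(C * ‖y‖) ≤ u ⬝ᵥ y := by
    intro y
    have h1 : |u ⬝ᵥ y| ≤ C * ‖y‖ := by
      calc |u ⬝ᵥ y| ≤ ∑ i, |u i * y i| := Finset.abs_sum_le_sum_abs _ _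
        _ ≤ ∑ i, |u i| * ‖y‖ := by
            refine Finset.sum_le_sum fun i _ => ?_
            rw [abs_mul]
            exact mul_le_mul_of_nonneg_left
              ((Real.norm_eq_abs _ ▸ norm_le_pi_norm y i)) (abs_nonneg _)
        _ = C * ‖y‖ := by rw [← Finset.sum_mul]
    linarith [neg_abs_le (u ⬝ᵥ y)]
  refine ⟨max 1 ((K:ℝ)^2 * |B| + (K:ℝ)^2 * C), fun y hy => ?_⟩
  by_contra hcon
  push_neg at hcon
  have h1 : (1:ℝ) ≤ ‖y‖ := le_of_lt (lt_of_le_of_lt (le_max_left _ _) hcon)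
  have h2 : (K:ℝ)^2 * |B| + (K:ℝ)^2 * C < ‖y‖ := lt_of_le_of_lt (le_max_right _ _) hcon
  have hK0' : (0:ℝ) < K := hK0
  -- ‖y‖^2 ≤ K^2 * (Py ⬝ Py)
  have h3 : ‖y‖^2 ≤ (K:ℝ)^2 * (P.mulVec y ⬝ᵥ P.mulVec y) := by
    calc ‖y‖^2 ≤ ((K:ℝ) * ‖P.mulVec y‖)^2 := by
          refine pow_le_pow_left₀ (norm_nonneg _) (hyP y) 2
      _ = (K:ℝ)^2 * ‖P.mulVec y‖^2 := by ring
      _ ≤ (K:ℝ)^2 * (P.mulVec y ⬝ᵥ P.mulVec y) := by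
          exact mul_le_mul_of_nonneg_left (hnorm_sq _) (by positivity)
  have h4 : P.mulVec y ⬝ᵥ P.mulVec y ≤ B + C * ‖y‖ := by
    have := hu y; linarith
  have h5 : ‖y‖^2 ≤ (K:ℝ)^2 * |B| + (K:ℝ)^2 * C * ‖y‖ := by
    have hB : B ≤ |B| := le_abs_self B
    nlinarith
  have h6 := mul_le_mul_of_nonneg_left h1 (by positivity : (0:ℝ) ≤ (K:ℝ)^2 * |B|)
  have h7 := mul_lt_mul_of_pos_right h2 (by linarith : (0:ℝ) < ‖y‖)
  nlinarith [sq_nonneg (‖y‖)]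

end min

section sep
variable {n T : ℕ}

noncomputable def Lmap (W : Matrix (Fin T) (Fin n) ℝ) (v : Fin T → ℝ) (θ : Fin T → ℝ) :
    EuclideanSpace ℝ (Option (Fin n)) :=
  WithLp.toLp 2 (fun o => Option.elim o (v ⬝ᵥ θ) (fun i => Wᵀ.mulVec θ i))

lemma key_closure (W : Matrix (Fin T) (Fin n) ℝ) (v : Fin T → ℝ) (c ys : Fin n → ℝ)
    (hdir : ∀ (d : Fin n → ℝ) (t : ℝ), (∀ i, 0 ≤ W.mulVec d i + t * v i) →
      0 ≤ c ⬝ᵥ d + t * (c ⬝ᵥ ys)) :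
    ∃ θs : ℕ → (Fin T → ℝ), (∀ k i, 0 ≤ θs k i) ∧
      Tendsto (fun k => Wᵀ.mulVec (θs k)) atTop (nhds c) ∧
      Tendsto (fun k => v ⬝ᵥ θs k) atTop (nhds (c ⬝ᵥ ys)) := by
  classical
  set E := EuclideanSpace ℝ (Option (Fin n)) with hE
  have hev : ∀ o : Option (Fin n), Continuous fun x : E => x o := fun o =>
    (continuous_apply o).comp (PiLp.continuous_ofLp _ _)
  have hsmul : ∀ (a : ℝ) (x : E) (o : Option (Fin n)), (a • x) o = a * x o := fun _ _ _ => rfl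
  have haddE : ∀ (x y : E) (o : Option (Fin n)), (x + y) o = x o + y o := fun _ _ _ => rfl
  set K : ConvexCone ℝ E :=
    { carrier := {x : E | ∃ θ : Fin T → ℝ, (∀ i, 0 ≤ θ i) ∧ x = Lmap W v θ}
      smul_mem' := by
        rintro a ha x ⟨θ, hθ, rfl⟩
        refine ⟨a • θ, fun i => mul_nonneg ha.le (hθ i), ?_⟩
        refine PiLp.ext fun o => ?_
        cases o <;>
          simp [Lmap, hsmul, Matrix.mulVec_smul, dotProduct_smul, smul_eq_mul]
      add_mem' := by
        rintro x ⟨θ₁, h₁, rfl⟩ y ⟨θ₂, h₂, rfl⟩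
        refine ⟨θ₁ + θ₂, fun i => add_nonneg (h₁ i) (h₂ i), ?_⟩
        refine PiLp.ext fun o => ?_
        cases o <;>
          simp [Lmap, haddE, Matrix.mulVec_add, dotProduct_add] } with hK
  have hKmem : ∀ x, x ∈ K ↔ ∃ θ : Fin T → ℝ, (∀ i, 0 ≤ θ i) ∧ x = Lmap W v θ := fun x => Iff.rfl
  set b : E := WithLp.toLp 2 (fun o => Option.elim o (c ⬝ᵥ ys) (fun i => c i)) with hb
  have hzero : (0 : E) ∈ K := by
    refine (hKmem 0).2 ⟨0, fun i => le_rfl, ?_⟩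
    refine PiLp.ext fun o => ?_
    cases o <;> simp [Lmap, show ∀ o : Option (Fin n), (0:E) o = 0 from fun _ => rfl]
  -- b is in the closure of K
  have hbmem : b ∈ closure (K : Set E) := by
    by_contra hbn
    obtain ⟨yE, hyE1, hyE2⟩ :=
      ProperCone.hyperplane_separation'
        ({ toSubmodule := K.closure.toPointedCone (subset_closure hzero),
           isClosed' := isClosed_closure } : ProperCone ℝ E) hbn
    set d : Fin n → ℝ := fun i => yE (Option.some i) with hd
    set t : ℝ := yE Option.none with ht
    have hinner : ∀ x : E, ⟪x, yE⟫_ℝ = x Option.none * t + ∑ i, x (Option.some i) * d i := by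
      intro x
      rw [PiLp.inner_apply]
      simp only [RCLike.inner_apply, conj_trivial]
      rw [Fintype.sum_option]
      simp only [hd, ht, mul_comm]
    have hcond : ∀ i, 0 ≤ W.mulVec d i + t * v i := by
      intro i
      have hmemK : Lmap W v (Pi.single i 1) ∈ K.closure :=
        subset_closure ((hKmem _).2 ⟨Pi.single i 1, fun j => by
          rw [Pi.single_apply]; split <;> norm_num, rfl⟩)
      have h0 := hyE1 _ hmemK
      rw [hinner] at h0
      simp only [Lmap, Option.elim] at h0
      rw [dotProduct_single] at h0
      have hcol : ∀ j, Wᵀ.mulVec (Pi.single i 1) j = W i j := by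
        intro j
        rw [Matrix.mulVec_single]
        simp
      simp only [hcol] at h0
      have : ∑ j, W i j * d j = W.mulVec d i := rfl
      rw [this] at h0
      linarith
    have hkey := hdir d t hcond
    have hbin : ⟪yE, b⟫_ℝ = c ⬝ᵥ d + t * (c ⬝ᵥ ys) := by
      rw [real_inner_comm, hinner]
      simp only [hb, Option.elim]
      simp [dotProduct]
      ring
    rw [real_inner_comm, hbin] at hyE2
    linarith
  -- extract a sequence
  rw [mem_closure_iff_seq_limit] at hbmem
  obtain ⟨x, hxK, hxlim⟩ := hbmem
  choose θs hθnn hθeq using fun k => (hKmem (x k)).1 (hxK k)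
  refine ⟨θs, hθnn, ?_, ?_⟩
  · rw [tendsto_pi_nhds]
    intro i
    have := ((hev (Option.some i)).tendsto b).comp hxlim
    have hxi : ∀ k, x k (Option.some i) = Wᵀ.mulVec (θs k) i := by
      intro k; rw [hθeq k]; rfl
    simp only [Function.comp_def, hxi] at this
    convert this using 2
    rfl
  · have := ((hev Option.none).tendsto b).comp hxlim
    have hxn : ∀ k, x k Option.none = v ⬝ᵥ θs k := by
      intro k; rw [hθeq k]; rfl
    simp only [Function.comp_def, hxn] at this
    convert this using 2
    rfl

end sep

open Filter in
/-- Strong duality for a convex quadratic program with strictly convex objective and a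
nonempty linear-inequality feasible set: the primal infimum equals the dual supremum and
both values are finite. -/
theorem quadratic_program_strong_duality
    (p n T : ℕ)
    (P : Matrix (Fin p) (Fin n) ℝ) (hP : (Pᵀ * P).PosDef)
    (W : Matrix (Fin T) (Fin n) ℝ) (u : Fin n → ℝ) (v : Fin T → ℝ)
    (hne : ∃ y : Fin n → ℝ, ∀ i, v i ≤ W.mulVec y i) :
    ∃ val : ℝ,
      sInf {z : EReal | ∃ y : Fin n → ℝ, (∀ i, v i ≤ W.mulVec y i) ∧
          z = ((P.mulVec y ⬝ᵥ P.mulVec y + u ⬝ᵥ y : ℝ) : EReal)} = (val : EReal) ∧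
      sSup {z : EReal | ∃ θ : Fin T → ℝ, (∀ i, 0 ≤ θ i) ∧
          z = ((v ⬝ᵥ θ - (1 / 4) * ((Wᵀ.mulVec θ - u) ⬝ᵥ
            (Pᵀ * P)⁻¹.mulVec (Wᵀ.mulVec θ - u)) : ℝ) : EReal)} = (val : EReal) := by
  classical
  obtain ⟨y₀, hy₀⟩ := hne
  set Q : Matrix (Fin n) (Fin n) ℝ := Pᵀ * P with hQdef
  have hQsym : Qᵀ = Q := by rw [hQdef, Matrix.transpose_mul, Matrix.transpose_transpose]
  have hdet : IsUnit Q.det := isUnit_iff_ne_zero.2 hP.det_pos.ne'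
  have hQQi : Q * Q⁻¹ = 1 := Matrix.mul_nonsing_inv _ hdet
  have hQiQ : Q⁻¹ * Q = 1 := Matrix.nonsing_inv_mul _ hdet
  have hQisym : (Q⁻¹)ᵀ = Q⁻¹ := by rw [Matrix.transpose_nonsing_inv, hQsym]
  have hswapQ := dot_swap hQsym
  have hswapQi := dot_swap hQisym
  have hzQznn : ∀ z : Fin n → ℝ, 0 ≤ z ⬝ᵥ Q.mulVec z := fun z => by
    have := hP.posSemidef.dotProduct_mulVec_nonneg z
    rwa [star_trivial] at this
  set f : (Fin n → ℝ) → ℝ := fun y => P.mulVec y ⬝ᵥ P.mulVec y + u ⬝ᵥ y with hfdef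
  set g : (Fin T → ℝ) → ℝ := fun θ =>
    v ⬝ᵥ θ - (1/4) * ((Wᵀ.mulVec θ - u) ⬝ᵥ Q⁻¹.mulVec (Wᵀ.mulVec θ - u)) with hgdef
  have hPQ : ∀ y : Fin n → ℝ, P.mulVec y ⬝ᵥ P.mulVec y = y ⬝ᵥ Q.mulVec y := by
    intro y
    rw [hQdef, ← Matrix.mulVec_mulVec, dot_transpose]
  -- existence of a primal minimizer
  have hSclosed : IsClosed {y : Fin n → ℝ | ∀ i, v i ≤ W.mulVec y i} := by
    have h : {y : Fin n → ℝ | ∀ i, v i ≤ W.mulVec y i}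
        = ⋂ i, {y | v i ≤ W.mulVec y i} := by ext; simp [Set.mem_iInter]
    rw [h]
    exact isClosed_iInter fun i => isClosed_le continuous_const (cont_mulVec_apply W i)
  have hfc : Continuous f := by
    refine Continuous.add ?_ (cont_dot_left u)
    simp only [dotProduct]
    exact continuous_finset_sum _ fun i _ => (cont_mulVec_apply P i).mul (cont_mulVec_apply P i)
  obtain ⟨ys, hysfeas, hysmin⟩ :=
    exists_minimizer _ hSclosed y₀ hy₀ f hfc (coercive_bound P hP u _)
  set c : Fin n → ℝ := (2:ℝ) • Q.mulVec ys + u with hcdef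
  -- second order expansion
  have hexp : ∀ (z : Fin n → ℝ) (ε : ℝ),
      f (ys + ε • z) = f ys + ε * (c ⬝ᵥ z) + ε^2 * (z ⬝ᵥ Q.mulVec z) := by
    intro z ε
    have h1 : f (ys + ε • z) = (ys + ε • z) ⬝ᵥ Q.mulVec (ys + ε • z) + u ⬝ᵥ (ys + ε • z) := by
      rw [hfdef]; exact congrArg (· + _) (hPQ _)
    rw [h1, hfdef]
    simp only [Matrix.mulVec_add, Matrix.mulVec_smul, dotProduct_add,
      add_dotProduct, dotProduct_smul, smul_dotProduct, smul_eq_mul,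
      hPQ ys, hcdef]
    rw [dotProduct_comm (Q.mulVec ys) z, hswapQ z ys]
    ring
  -- weak duality
  have hweak : ∀ θ : Fin T → ℝ, (∀ i, 0 ≤ θ i) → ∀ y, (∀ i, v i ≤ W.mulVec y i) → g θ ≤ f y := by
    intro θ hθ y hyfeas
    set s : Fin n → ℝ := Wᵀ.mulVec θ - u with hs
    set z : Fin n → ℝ := y - (1/2 : ℝ) • Q⁻¹.mulVec s with hz
    have hQz : Q.mulVec z = Q.mulVec y - (1/2 : ℝ) • s := by
      rw [hz, Matrix.mulVec_sub, Matrix.mulVec_smul, Matrix.mulVec_mulVec, hQQi,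
        Matrix.one_mulVec]
    have h1 : z ⬝ᵥ Q.mulVec z
        = y ⬝ᵥ Q.mulVec y - y ⬝ᵥ s + (1/4) * (s ⬝ᵥ Q⁻¹.mulVec s) := by
      rw [hQz, hz]
      simp only [sub_dotProduct, dotProduct_sub, smul_dotProduct,
        dotProduct_smul, smul_eq_mul]
      rw [hswapQ (Q⁻¹.mulVec s) y, Matrix.mulVec_mulVec, hQQi, Matrix.one_mulVec,
        dotProduct_comm (Q⁻¹.mulVec s) s, dotProduct_comm y s]
      ring
    have h2 : y ⬝ᵥ s + u ⬝ᵥ y = W.mulVec y ⬝ᵥ θ := by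
      rw [hs, dotProduct_sub, dot_transpose, dotProduct_comm y u]
      ring
    have h3 : 0 ≤ z ⬝ᵥ Q.mulVec z := hzQznn z
    have h4 : 0 ≤ (W.mulVec y - v) ⬝ᵥ θ := by
      refine Finset.sum_nonneg fun i _ => mul_nonneg ?_ (hθ i)
      have := hyfeas i
      simp only [Pi.sub_apply]
      linarith
    have h5 : (W.mulVec y - v) ⬝ᵥ θ = W.mulVec y ⬝ᵥ θ - v ⬝ᵥ θ := sub_dotProduct _ _ _
    have hfy : f y = y ⬝ᵥ Q.mulVec y + u ⬝ᵥ y := by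
      rw [hfdef]; exact congrArg (· + _) (hPQ _)
    have hgθ : g θ = v ⬝ᵥ θ - (1/4) * (s ⬝ᵥ Q⁻¹.mulVec s) := by rw [hgdef]
    rw [hfy, hgθ]
    linarith
  -- directional optimality
  have hdir : ∀ (d : Fin n → ℝ) (t : ℝ), (∀ i, 0 ≤ W.mulVec d i + t * v i) →
      0 ≤ c ⬝ᵥ d + t * (c ⬝ᵥ ys) := by
    intro d t hdt
    set z : Fin n → ℝ := d + t • ys with hzdef
    have hcz : c ⬝ᵥ z = c ⬝ᵥ d + t * (c ⬝ᵥ ys) := by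
      rw [hzdef, dotProduct_add, dotProduct_smul, smul_eq_mul]
    rw [← hcz]
    have hδ0 : (0:ℝ) < 1 / (1 + |t|) := by positivity
    have hfeasz : ∀ ε : ℝ, 0 < ε → ε ≤ 1 / (1 + |t|) →
        ∀ i, v i ≤ W.mulVec (ys + ε • z) i := by
      intro ε hε hεδ i
      have hWz : W.mulVec (ys + ε • z) i
          = W.mulVec ys i + ε * (W.mulVec d i + t * W.mulVec ys i) := by
        rw [hzdef]
        simp only [Matrix.mulVec_add, Matrix.mulVec_smul, Pi.add_apply, Pi.smul_apply,
          smul_eq_mul]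
        try ring
      have ha := hysfeas i
      have hh := hdt i
      have hε1 : ε * (1 + |t|) ≤ 1 := by
        rw [le_div_iff₀ (by positivity)] at hεδ
        exact hεδ
      have hp1 : 0 ≤ ε * (t + |t|) := mul_nonneg hε.le (by linarith [neg_abs_le t])
      have h1εt : (0:ℝ) ≤ 1 + ε * t := by nlinarith
      rw [hWz]
      nlinarith [mul_nonneg hε.le hh, mul_nonneg h1εt (show 0 ≤ W.mulVec ys i - v i by linarith)]
    by_contra hcon
    push_neg at hcon
    set M : ℝ := z ⬝ᵥ Q.mulVec z with hM
    have hMnn : 0 ≤ M := hzQznn z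
    have hM1 : 0 < M + 1 := by linarith
    set ε : ℝ := min (1 / (1 + |t|)) ((-(c ⬝ᵥ z)) / (M + 1)) with hεdef
    have hε0 : 0 < ε := lt_min hδ0 (div_pos (by linarith) hM1)
    have hfle := hysmin _ (hfeasz ε hε0 (min_le_left _ _))
    rw [hexp z ε] at hfle
    have h5 : 0 ≤ ε * (c ⬝ᵥ z) + ε^2 * M := by linarith
    have h6 : ε ≤ (-(c ⬝ᵥ z)) / (M + 1) := min_le_right _ _
    rw [le_div_iff₀ hM1] at h6
    nlinarith [mul_le_mul_of_nonneg_left h6 hε0.le, mul_pos hε0 hε0]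
  -- conclusion
  refine ⟨f ys, ?_, ?_⟩
  · apply le_antisymm
    · exact sInf_le ⟨ys, hysfeas, rfl⟩
    · refine le_sInf ?_
      rintro z ⟨y, hyfeas, rfl⟩
      exact EReal.coe_le_coe_iff.2 (hysmin y hyfeas)
  · apply le_antisymm
    · refine sSup_le ?_
      rintro z ⟨θ, hθ, rfl⟩
      exact EReal.coe_le_coe_iff.2 (hweak θ hθ ys hysfeas)
    · obtain ⟨θs, hθnn, hWlim, hvlim⟩ := key_closure W v c ys hdir
      set h : (Fin n → ℝ) → ℝ := fun s => (1/4) * ((s - u) ⬝ᵥ Q⁻¹.mulVec (s - u)) with hhdef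
      have hhc : Continuous h := by
        rw [hhdef]
        refine continuous_const.mul ?_
        simp only [dotProduct, Matrix.mulVec, Pi.sub_apply]
        refine continuous_finset_sum _ fun i _ => Continuous.mul ?_ ?_
        · exact (continuous_apply i).sub continuous_const
        · exact continuous_finset_sum _ fun j _ =>
            continuous_const.mul ((continuous_apply j).sub continuous_const)
      have hcu : c - u = (2:ℝ) • Q.mulVec ys := by
        rw [hcdef]; exact add_sub_cancel_right _ _
      have hQic : Q⁻¹.mulVec (c - u) = (2:ℝ) • ys := by
        rw [hcu, Matrix.mulVec_smul, Matrix.mulVec_mulVec, hQiQ, Matrix.one_mulVec]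
      have hfinal : c ⬝ᵥ ys - h c = f ys := by
        have hhc2 : h c = Q.mulVec ys ⬝ᵥ ys := by
          rw [hhdef]
          simp only
          rw [hQic, hcu, smul_dotProduct, dotProduct_smul, smul_eq_mul]
          simp only [smul_eq_mul]
          ring
        have hcys : c ⬝ᵥ ys = 2 * (Q.mulVec ys ⬝ᵥ ys) + u ⬝ᵥ ys := by
          rw [hcdef, add_dotProduct, smul_dotProduct, smul_eq_mul]
        have hfys : f ys = Q.mulVec ys ⬝ᵥ ys + u ⬝ᵥ ys := by
          rw [hfdef]
          simp only
          rw [hPQ ys, dotProduct_comm]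
        rw [hhc2, hcys, hfys]
        ring
      have hglim : Tendsto (fun k => g (θs k)) atTop (nhds (f ys)) := by
        have h1 : Tendsto (fun k => h (Wᵀ.mulVec (θs k))) atTop (nhds (h c)) :=
          (hhc.tendsto c).comp hWlim
        have h2 : Tendsto (fun k => v ⬝ᵥ θs k - h (Wᵀ.mulVec (θs k))) atTop
            (nhds (c ⬝ᵥ ys - h c)) := hvlim.sub h1
        rw [hfinal] at h2
        convert h2 using 2
      refine le_of_tendsto' (EReal.tendsto_coe.2 hglim) fun k => le_sSup ⟨θs k, hθnn k, ?_⟩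
      rw [hgdef]
end

section
/- Let P ∈ ℝ^{p×n} with PᵀP positive definite, W ∈ ℝ^{T×n}, R ∈ ℝ^{n×K}, r ∈ ℝ^n, and suppose there exists y⁺ ∈ ℝ^n with Wy⁺ > 0 componentwise (complete recourse). Let T̄ ∈ ℝ^{T×K}, h ∈ ℝ^T, A ∈ ℝ^{M×K}, b ∈ ℝ^K, c ∈ ℝ, and for each ξ ∈ ℝ^K define the recourse value R(ξ) = inf{ ‖Py‖² + (Rξ + r)ᵀy : y ∈ ℝ^n, Wy ≥ T̄ξ + h }. Then for every nonempty set Ξ ⊆ ℝ^K: sup_{ξ∈Ξ} ( ‖Aξ‖² + bᵀξ + c + R(ξ) ) = sup{ ‖Aξ‖² + bᵀξ + c − ¼ (Wᵀθ − Rξ − r)ᵀ (PᵀP)⁻¹ (Wᵀθ − Rξ − r) + (T̄ξ + h)ᵀθ : ξ ∈ Ξ, θ ∈ ℝ^T, θ ≥ 0 }, where both suprema are taken in the extended reals. -/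
open Matrix

variable {n T : ℕ}

section
variable {Mx : Matrix (Fin n) (Fin n) ℝ}

lemma my_transpose_eq (hM : Mx.PosDef) : Mxᵀ = Mx := by
  have := hM.isHermitian
  simpa [Matrix.IsHermitian] using this

lemma my_nonneg (hM : Mx.PosDef) (x : Fin n → ℝ) : 0 ≤ x ⬝ᵥ Mx *ᵥ x := by
  have := hM.posSemidef.re_dotProduct_nonneg x
  simpa using this

lemma my_quad_expand (hM : Mx.PosDef) (s y : Fin n → ℝ) :
    (y - (2⁻¹ : ℝ) • (Mx⁻¹ *ᵥ s)) ⬝ᵥ Mx *ᵥ (y - (2⁻¹ : ℝ) • (Mx⁻¹ *ᵥ s))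
      = y ⬝ᵥ Mx *ᵥ y - s ⬝ᵥ y + 4⁻¹ * (s ⬝ᵥ Mx⁻¹ *ᵥ s) := by
  have hsym := my_transpose_eq hM
  have hMs : Mx *ᵥ (Mx⁻¹ *ᵥ s) = s := by
    rw [mulVec_mulVec, Matrix.mul_nonsing_inv _ hM.det_pos.ne'.isUnit, one_mulVec]
  have h1 : (Mx⁻¹ *ᵥ s) ⬝ᵥ Mx *ᵥ y = s ⬝ᵥ y := by
    rw [dotProduct_mulVec, ← hsym, vecMul_transpose, hsym, hMs]
  have h2 : y ⬝ᵥ Mx *ᵥ (Mx⁻¹ *ᵥ s) = s ⬝ᵥ y := by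
    rw [hMs, dotProduct_comm]
  have h3 : (Mx⁻¹ *ᵥ s) ⬝ᵥ Mx *ᵥ (Mx⁻¹ *ᵥ s) = s ⬝ᵥ Mx⁻¹ *ᵥ s := by
    rw [hMs, dotProduct_comm]
  simp only [Matrix.mulVec_sub, Matrix.mulVec_smul, sub_dotProduct, dotProduct_sub,
    smul_dotProduct, dotProduct_smul, smul_eq_mul, h1, h2, h3]
  ring

lemma my_cs_key (hM : Mx.PosDef) (s y : Fin n → ℝ) :
    -(4⁻¹ : ℝ) * (s ⬝ᵥ Mx⁻¹ *ᵥ s) ≤ y ⬝ᵥ Mx *ᵥ y - s ⬝ᵥ y := by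
  have h0 := my_nonneg hM (y - (2⁻¹ : ℝ) • (Mx⁻¹ *ᵥ s))
  rw [my_quad_expand hM] at h0
  linarith

lemma my_cs_eq (hM : Mx.PosDef) (s : Fin n → ℝ) :
    ((2⁻¹ : ℝ) • (Mx⁻¹ *ᵥ s)) ⬝ᵥ Mx *ᵥ ((2⁻¹ : ℝ) • (Mx⁻¹ *ᵥ s)) - s ⬝ᵥ ((2⁻¹ : ℝ) • (Mx⁻¹ *ᵥ s))
      = -(4⁻¹ : ℝ) * (s ⬝ᵥ Mx⁻¹ *ᵥ s) := by
  have h0 := my_quad_expand hM s ((2⁻¹ : ℝ) • (Mx⁻¹ *ᵥ s))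
  rw [sub_self] at h0
  simp only [zero_dotProduct] at h0
  linarith

lemma my_lag (W : Matrix (Fin T) (Fin n) ℝ)
    (d : Fin T → ℝ) (q : Fin n → ℝ) (θ : Fin T → ℝ) (y : Fin n → ℝ) :
    (y ⬝ᵥ Mx *ᵥ y + q ⬝ᵥ y) + ∑ i, (d i - W.mulVec y i) * θ i
      = y ⬝ᵥ Mx *ᵥ y - (Wᵀ *ᵥ θ - q) ⬝ᵥ y + d ⬝ᵥ θ := by
  have h1 : ∑ i, (d i - W.mulVec y i) * θ i = d ⬝ᵥ θ - (W *ᵥ y) ⬝ᵥ θ := by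
    simp [dotProduct, sub_mul, Finset.sum_sub_distrib]
  have h2 : (W *ᵥ y) ⬝ᵥ θ = (Wᵀ *ᵥ θ) ⬝ᵥ y := by
    rw [dotProduct_comm, dotProduct_mulVec, ← mulVec_transpose]
  rw [h1, h2, sub_dotProduct]
  ring

lemma my_convlt {a b s1 s2 t1 t2 : ℝ} (ha : 0 ≤ a) (hb : 0 ≤ b) (hab : a + b = 1)
    (h1 : s1 < t1) (h2 : s2 < t2) : a * s1 + b * s2 < a * t1 + b * t2 := by
  rcases eq_or_lt_of_le ha with h | h
  · have hb1 : b = 1 := by linarith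
    simp [← h, hb1, h2]
  · exact add_lt_add_of_lt_of_le (mul_lt_mul_of_pos_left h1 h)
      (mul_le_mul_of_nonneg_left h2.le hb)

lemma my_fconvex (hM : Mx.PosDef)
    (q : Fin n → ℝ) (y1 y2 : Fin n → ℝ) {a b : ℝ} (ha : 0 ≤ a) (hb : 0 ≤ b) (hab : a + b = 1) :
    (a • y1 + b • y2) ⬝ᵥ Mx *ᵥ (a • y1 + b • y2) + q ⬝ᵥ (a • y1 + b • y2)
      ≤ a * (y1 ⬝ᵥ Mx *ᵥ y1 + q ⬝ᵥ y1) + b * (y2 ⬝ᵥ Mx *ᵥ y2 + q ⬝ᵥ y2) := by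
  have hMs := my_transpose_eq hM
  have hk := my_nonneg hM (y1 - y2)
  have h12 : y2 ⬝ᵥ Mx *ᵥ y1 = y1 ⬝ᵥ Mx *ᵥ y2 := by
    rw [dotProduct_mulVec, ← hMs, vecMul_transpose, dotProduct_comm, hMs]
  simp only [Matrix.mulVec_add, Matrix.mulVec_smul, Matrix.mulVec_sub, sub_dotProduct,
    dotProduct_sub, dotProduct_add, add_dotProduct, smul_dotProduct, dotProduct_smul,
    smul_eq_mul, h12] at hk ⊢
  have hb' : b = 1 - a := by linarith
  subst hb'
  nlinarith [mul_nonneg (mul_nonneg ha hb) hk]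

lemma my_weak (hM : Mx.PosDef) (W : Matrix (Fin T) (Fin n) ℝ) (d : Fin T → ℝ) (q : Fin n → ℝ)
    {θ : Fin T → ℝ} (hθ : ∀ i, 0 ≤ θ i) {y : Fin n → ℝ} (hy : ∀ i, d i ≤ W.mulVec y i) :
    -(4⁻¹ : ℝ) * ((Wᵀ *ᵥ θ - q) ⬝ᵥ Mx⁻¹ *ᵥ (Wᵀ *ᵥ θ - q)) + d ⬝ᵥ θ
      ≤ y ⬝ᵥ Mx *ᵥ y + q ⬝ᵥ y := by
  have hcs := my_cs_key hM (Wᵀ *ᵥ θ - q) y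
  have hlag := my_lag (Mx := Mx) W d q θ y
  have hle : ∑ i, (d i - W.mulVec y i) * θ i ≤ 0 :=
    Finset.sum_nonpos fun i _ => mul_nonpos_of_nonpos_of_nonneg (sub_nonpos.mpr (hy i)) (hθ i)
  linarith

lemma my_strong (hM : Mx.PosDef) (W : Matrix (Fin T) (Fin n) ℝ)
    (d : Fin T → ℝ) (q : Fin n → ℝ) {yh : Fin n → ℝ} (hyh : ∀ i, d i < W.mulVec yh i) :
    ∃ θ : Fin T → ℝ, (∀ i, 0 ≤ θ i) ∧
      sInf {x : ℝ | ∃ y : Fin n → ℝ, (∀ i, d i ≤ W.mulVec y i) ∧ x = y ⬝ᵥ Mx *ᵥ y + q ⬝ᵥ y}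
        ≤ -(4⁻¹ : ℝ) * ((Wᵀ *ᵥ θ - q) ⬝ᵥ Mx⁻¹ *ᵥ (Wᵀ *ᵥ θ - q)) + d ⬝ᵥ θ := by
  classical
  set f : (Fin n → ℝ) → ℝ := fun y => y ⬝ᵥ Mx *ᵥ y + q ⬝ᵥ y with hf
  set Fr : Set ℝ := {x : ℝ | ∃ y : Fin n → ℝ, (∀ i, d i ≤ W.mulVec y i) ∧ x = f y} with hFr
  have hne : Fr.Nonempty := ⟨f yh, yh, fun i => (hyh i).le, rfl⟩
  have hbdd : BddBelow Fr := by
    refine ⟨-(4⁻¹ : ℝ) * (q ⬝ᵥ Mx⁻¹ *ᵥ q), ?_⟩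
    rintro x ⟨y, -, rfl⟩
    have := my_cs_key hM (-q) y
    simp only [neg_dotProduct, dotProduct_neg, Matrix.mulVec_neg, neg_neg] at this
    simp only [hf]
    linarith
  set pstar : ℝ := sInf Fr with hpstar
  set S : Set ((Fin T → ℝ) × ℝ) :=
    {z | ∃ y : Fin n → ℝ, (∀ i, d i - W.mulVec y i < z.1 i) ∧ f y < z.2} with hS
  -- S is open
  have hSopen : IsOpen S := by
    have hrw : S = ⋃ y : Fin n → ℝ,
        ((fun z : (Fin T → ℝ) × ℝ => z.1) ⁻¹' Set.univ.pi fun i => Set.Ioi (d i - W.mulVec y i)) ∩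
        ((fun z : (Fin T → ℝ) × ℝ => z.2) ⁻¹' Set.Ioi (f y)) := by
      ext z
      simp [hS, Set.mem_iUnion, Set.mem_pi]
    rw [hrw]
    exact isOpen_iUnion fun y =>
      ((isOpen_set_pi Set.finite_univ fun i _ => isOpen_Ioi).preimage continuous_fst).inter
        (isOpen_Ioi.preimage continuous_snd)
  -- S is convex
  have hSconv : Convex ℝ S := by
    rintro z1 ⟨y1, hy1, hy1'⟩ z2 ⟨y2, hy2, hy2'⟩ a b ha hb hab
    refine ⟨a • y1 + b • y2, fun i => ?_, ?_⟩
    · have key : d i - W.mulVec (a • y1 + b • y2) i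
          = a * (d i - W.mulVec y1 i) + b * (d i - W.mulVec y2 i) := by
        simp only [Matrix.mulVec_add, Matrix.mulVec_smul, Pi.add_apply, Pi.smul_apply,
          smul_eq_mul]
        linear_combination (-(d i)) * hab
      have h2 : (a • z1 + b • z2).1 i = a * z1.1 i + b * z2.1 i := by
        simp [Prod.fst_add]
      rw [key, h2]
      exact my_convlt ha hb hab (hy1 i) (hy2 i)
    · have h2 : (a • z1 + b • z2).2 = a * z1.2 + b * z2.2 := by
        simp [Prod.snd_add]
      rw [h2]
      calc f (a • y1 + b • y2) ≤ a * f y1 + b * f y2 := my_fconvex hM q y1 y2 ha hb hab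
        _ < a * z1.2 + b * z2.2 := my_convlt ha hb hab hy1' hy2'
  -- the point to separate
  have hx0 : (((0 : Fin T → ℝ), pstar) : (Fin T → ℝ) × ℝ) ∉ S := by
    rintro ⟨y, hy1, hy2⟩
    have hfeas : ∀ i, d i ≤ W.mulVec y i := fun i => by
      have := hy1 i; simp only [Pi.zero_apply] at this; linarith
    have : pstar ≤ f y := csInf_le hbdd ⟨y, hfeas, rfl⟩
    exact absurd hy2 (not_lt.mpr this)
  obtain ⟨φ, hφ⟩ := geometric_hahn_banach_point_open hSconv hSopen hx0
  set θt : Fin T → ℝ := fun i => φ ((fun j => if i = j then 1 else 0), 0) with hθt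
  set γ : ℝ := φ (0, 1) with hγdef
  have hrep : ∀ (u : Fin T → ℝ) (t : ℝ), φ (u, t) = (∑ i, u i * θt i) + t * γ := by
    intro u t
    have h1 : ((u, t) : (Fin T → ℝ) × ℝ) = (u, 0) + (0, t) := by
      simp [Prod.ext_iff]
    rw [h1, map_add]
    have h2 : (((0 : Fin T → ℝ), t) : (Fin T → ℝ) × ℝ) = t • (((0 : Fin T → ℝ), (1 : ℝ))) := by
      simp [Prod.ext_iff]
    rw [h2, ContinuousLinearMap.map_smul, smul_eq_mul]
    congr 1
    have h3 := LinearMap.pi_apply_eq_sum_univ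
      ((φ : (Fin T → ℝ) × ℝ →ₗ[ℝ] ℝ).comp (LinearMap.inl ℝ (Fin T → ℝ) ℝ)) u
    simpa [smul_eq_mul] using h3
  have hx0v : φ ((0 : Fin T → ℝ), pstar) = pstar * γ := by
    rw [hrep]; simp
  -- γ is nonneg
  have hγ : 0 ≤ γ := by
    by_contra hc
    push_neg at hc
    set C : ℝ := ∑ i, (d i - W.mulVec yh i + 1) * θt i with hC
    set m : ℝ := max (f yh + 1) ((pstar * γ - C) / γ) with hm
    have hm1 : f yh < m := lt_of_lt_of_le (by linarith) (le_max_left _ _)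
    have hmem : (((fun i => d i - W.mulVec yh i + 1), m) : (Fin T → ℝ) × ℝ) ∈ S := by
      refine ⟨yh, fun i => ?_, ?_⟩ <;> dsimp only
      · linarith
      · exact hm1
    have h5 := hφ _ hmem
    rw [hx0v, hrep] at h5
    have h6 : (pstar * γ - C) / γ ≤ m := le_max_right _ _
    have h7 : m * γ ≤ pstar * γ - C := by
      have := (div_le_iff_of_neg hc).mp h6
      linarith
    linarith
  -- θt is nonneg
  have hθtn : ∀ i0, 0 ≤ θt i0 := by
    intro i0
    by_contra hc
    push_neg at hc
    set C : ℝ := (∑ i, (d i - W.mulVec yh i + 1) * θt i) + (f yh + 1) * γ with hC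
    set m : ℝ := max 0 ((pstar * γ - C) / θt i0) with hm
    have hm0 : 0 ≤ m := le_max_left _ _
    have hmem : (((fun i => d i - W.mulVec yh i + 1 + (if i = i0 then m else 0)),
        f yh + 1) : (Fin T → ℝ) × ℝ) ∈ S := by
      refine ⟨yh, fun i => ?_, ?_⟩
      · have : (0 : ℝ) ≤ (if i = i0 then m else 0) := by
          split <;> simp [hm0]
        dsimp only
        linarith
      · dsimp only
        linarith
    have h5 := hφ _ hmem
    rw [hx0v, hrep] at h5
    have hsum : ∑ i, (d i - W.mulVec yh i + 1 + (if i = i0 then m else 0)) * θt i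
        = (∑ i, (d i - W.mulVec yh i + 1) * θt i) + m * θt i0 := by
      simp only [add_mul, Finset.sum_add_distrib, ite_mul, zero_mul]
      rw [Finset.sum_ite_eq' Finset.univ i0 (fun i => m * θt i)]
      simp
    rw [hsum] at h5
    have h6 : (pstar * γ - C) / θt i0 ≤ m := le_max_right _ _
    have h7 : m * θt i0 ≤ pstar * γ - C := by
      have := (div_le_iff_of_neg hc).mp h6
      linarith
    linarith
  -- the Lagrangian inequality
  have hLag : ∀ y : Fin n → ℝ,
      pstar * γ ≤ (∑ i, (d i - W.mulVec y i) * θt i) + f y * γ := by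
    intro y
    by_contra hc
    push_neg at hc
    set Rv : ℝ := (∑ i, (d i - W.mulVec y i) * θt i) + f y * γ with hRv
    set ε : ℝ := pstar * γ - Rv with hε
    have hεpos : 0 < ε := by simp only [hε]; linarith
    set k : ℝ := (∑ i, θt i) + γ with hk
    have hkn : 0 ≤ k := add_nonneg (Finset.sum_nonneg fun i _ => hθtn i) hγ
    set δ : ℝ := ε / (k + 1) with hδ
    have hδpos : 0 < δ := div_pos hεpos (by linarith)
    have hmem : (((fun i => d i - W.mulVec y i + δ), f y + δ) : (Fin T → ℝ) × ℝ) ∈ S := by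
      refine ⟨y, fun i => ?_, ?_⟩ <;> dsimp only <;> linarith
    have h5 := hφ _ hmem
    rw [hx0v, hrep] at h5
    have hsum : ∑ i, (d i - W.mulVec y i + δ) * θt i
        = (∑ i, (d i - W.mulVec y i) * θt i) + δ * ∑ i, θt i := by
      simp only [add_mul, Finset.sum_add_distrib]
      rw [← Finset.mul_sum]
    rw [hsum] at h5
    have hlt : δ * k < ε := by
      rw [hδ, div_mul_eq_mul_div, div_lt_iff₀ (by linarith : (0:ℝ) < k + 1)]
      nlinarith
    simp only [hk] at hlt
    nlinarith [hlt, h5]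
  -- γ is positive
  have hγpos : 0 < γ := by
    rcases hγ.lt_or_eq with h | h
    · exact h
    · exfalso
      have hγ0 : γ = 0 := h.symm
      have hall : ∀ i, θt i = 0 := by
        have h0 := hLag yh
        rw [hγ0] at h0
        simp only [mul_zero, add_zero] at h0
        have hterm : ∀ i ∈ Finset.univ, (0:ℝ) ≤ -((d i - W.mulVec yh i) * θt i) := by
          intro i _
          have h1 : d i - W.mulVec yh i ≤ 0 := by have := hyh i; linarith
          have := mul_nonpos_of_nonpos_of_nonneg h1 (hθtn i)
          linarith
        have hzero : ∑ i, -((d i - W.mulVec yh i) * θt i) = 0 := by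
          have h2 : ∑ i, -((d i - W.mulVec yh i) * θt i)
              = -(∑ i, (d i - W.mulVec yh i) * θt i) := by
            rw [Finset.sum_neg_distrib]
          have h3 : ∑ i, -((d i - W.mulVec yh i) * θt i) ≤ 0 := by rw [h2]; linarith
          have h4 : 0 ≤ ∑ i, -((d i - W.mulVec yh i) * θt i) :=
            Finset.sum_nonneg hterm
          linarith
        intro i
        have h5 := (Finset.sum_eq_zero_iff_of_nonneg hterm).mp hzero i (Finset.mem_univ i)
        have h6 : (d i - W.mulVec yh i) * θt i = 0 := by linarith
        rcases mul_eq_zero.mp h6 with h7 | h7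
        · exfalso; have := hyh i; linarith [h7]
        · exact h7
      have hmem : (((fun i => d i - W.mulVec yh i + 1), f yh + 1) : (Fin T → ℝ) × ℝ) ∈ S := by
        refine ⟨yh, fun i => ?_, ?_⟩ <;> dsimp only <;> linarith
      have h5 := hφ _ hmem
      rw [hx0v, hrep, hγ0] at h5
      simp only [hall, mul_zero, Finset.sum_const_zero] at h5
      linarith
  -- normalized multipliers
  set θ : Fin T → ℝ := fun i => γ⁻¹ * θt i with hθdef
  have hθn : ∀ i, 0 ≤ θ i := fun i => mul_nonneg (inv_nonneg.mpr hγ) (hθtn i)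
  have hLag' : ∀ y : Fin n → ℝ, pstar ≤ f y + ∑ i, (d i - W.mulVec y i) * θ i := by
    intro y
    have h0 := hLag y
    have hsum : ∑ i, (d i - W.mulVec y i) * θ i
        = γ⁻¹ * ∑ i, (d i - W.mulVec y i) * θt i := by
      rw [Finset.mul_sum]
      exact Finset.sum_congr rfl fun i _ => by simp only [hθdef]; ring
    rw [hsum]
    have hinv : γ * γ⁻¹ = 1 := mul_inv_cancel₀ hγpos.ne'
    have h1 := mul_le_mul_of_nonneg_right h0 (inv_nonneg.mpr hγ)
    calc pstar = pstar * γ * γ⁻¹ := by rw [mul_assoc, hinv, mul_one]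
      _ ≤ ((∑ i, (d i - W.mulVec y i) * θt i) + f y * γ) * γ⁻¹ := h1
      _ = f y + γ⁻¹ * ∑ i, (d i - W.mulVec y i) * θt i := by
          rw [add_mul, mul_assoc, hinv, mul_one]; ring
  -- conclude with the dual-optimal point
  refine ⟨θ, hθn, ?_⟩
  set s : Fin n → ℝ := Wᵀ *ᵥ θ - q with hs
  set ys : Fin n → ℝ := (2⁻¹ : ℝ) • (Mx⁻¹ *ᵥ s) with hys
  have hattain : f ys + ∑ i, (d i - W.mulVec ys i) * θ i
      = -(4⁻¹ : ℝ) * (s ⬝ᵥ Mx⁻¹ *ᵥ s) + d ⬝ᵥ θ := by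
    have h1 := my_lag (Mx := Mx) W d q θ ys
    have h2 := my_cs_eq hM s
    simp only [hf, ← hs] at h1 ⊢
    rw [h1]
    rw [hys]
    linarith [h2]
  calc pstar ≤ f ys + ∑ i, (d i - W.mulVec ys i) * θ i := hLag' ys
    _ = -(4⁻¹ : ℝ) * (s ⬝ᵥ Mx⁻¹ *ᵥ s) + d ⬝ᵥ θ := hattain


lemma my_bdd (hM : Mx.PosDef) (W : Matrix (Fin T) (Fin n) ℝ) (d : Fin T → ℝ) (q : Fin n → ℝ) :
    BddBelow {x : ℝ | ∃ y : Fin n → ℝ, (∀ i, d i ≤ W.mulVec y i) ∧ x = y ⬝ᵥ Mx *ᵥ y + q ⬝ᵥ y} := by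
  refine ⟨-(4⁻¹ : ℝ) * (q ⬝ᵥ Mx⁻¹ *ᵥ q), ?_⟩
  rintro x ⟨y, -, rfl⟩
  have := my_cs_key hM (-q) y
  simp only [neg_dotProduct, dotProduct_neg, Matrix.mulVec_neg, neg_neg] at this
  linarith

end

lemma my_slater {n T : ℕ} (W : Matrix (Fin T) (Fin n) ℝ) {yp : Fin n → ℝ}
    (hyp : ∀ i, 0 < W.mulVec yp i) (d : Fin T → ℝ) :
    ∃ y : Fin n → ℝ, ∀ i, d i < W.mulVec y i := by
  refine ⟨(1 + ∑ j, |d j / W.mulVec yp j|) • yp, fun i => ?_⟩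
  rw [Matrix.mulVec_smul]
  simp only [Pi.smul_apply, smul_eq_mul]
  have h1 : |d i / W.mulVec yp i| ≤ ∑ j, |d j / W.mulVec yp j| :=
    Finset.single_le_sum (f := fun j => |d j / W.mulVec yp j|) (fun j _ => abs_nonneg _)
      (Finset.mem_univ i)
  have h2 : d i / W.mulVec yp i < 1 + ∑ j, |d j / W.mulVec yp j| := by
    have := le_abs_self (d i / W.mulVec yp i); linarith
  have := (div_lt_iff₀ (hyp i)).mp h2
  linarith

lemma my_ereal_sInf {S : Set ℝ} (hne : S.Nonempty) (hbd : BddBelow S) :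
    sInf {w : EReal | ∃ x ∈ S, w = (x : ℝ) } = ((sInf S : ℝ) : EReal) := by
  apply le_antisymm
  · by_contra hcon
    push_neg at hcon
    rw [← not_le] at hcon
    have hcon' : ((sInf S : ℝ) : EReal) < sInf {w : EReal | ∃ x ∈ S, w = (x : ℝ)} :=
      lt_of_not_ge fun hle => hcon hle
    obtain ⟨x, hx1, hx2⟩ := EReal.lt_iff_exists_real_btwn.mp hcon'
    have h1 : sInf S < x := by exact_mod_cast hx1
    obtain ⟨s, hs, hsx⟩ := (csInf_lt_iff hbd hne).mp h1
    have h2 : sInf {w : EReal | ∃ x ∈ S, w = (x : ℝ)} ≤ (s : EReal) := sInf_le ⟨s, hs, rfl⟩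
    have h3 : (s : EReal) < (x : EReal) := by exact_mod_cast hsx
    exact absurd (hx2.trans_le (h2.trans h3.le)) (lt_irrefl _)
  · refine le_sInf ?_
    rintro w ⟨x, hx, rfl⟩
    exact_mod_cast csInf_le hbd hx

/-- Under complete recourse, the worst-case two-stage quadratic objective equals the
supremum of the combined primal-dual objective over the uncertainty set and nonnegative
dual multipliers (values taken in the extended reals). -/
theorem two_stage_dualization
    (p n T K M : ℕ)
    (P : Matrix (Fin p) (Fin n) ℝ) (hP : (Pᵀ * P).PosDef)
    (W : Matrix (Fin T) (Fin n) ℝ)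
    (R : Matrix (Fin n) (Fin K) ℝ) (r : Fin n → ℝ)
    (hcr : ∃ yplus : Fin n → ℝ, ∀ i, 0 < W.mulVec yplus i)
    (Tb : Matrix (Fin T) (Fin K) ℝ) (h : Fin T → ℝ)
    (A : Matrix (Fin M) (Fin K) ℝ) (b : Fin K → ℝ) (c : ℝ)
    (Ξ : Set (Fin K → ℝ)) (hΞ : Ξ.Nonempty) :
    sSup {z : EReal | ∃ ξ ∈ Ξ,
        z = ((A.mulVec ξ ⬝ᵥ A.mulVec ξ + b ⬝ᵥ ξ + c : ℝ) : EReal) +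
          sInf {w : EReal | ∃ y : Fin n → ℝ,
            (∀ i, (Tb.mulVec ξ + h) i ≤ W.mulVec y i) ∧
            w = ((P.mulVec y ⬝ᵥ P.mulVec y + (R.mulVec ξ + r) ⬝ᵥ y : ℝ) : EReal)}} =
    sSup {z : EReal | ∃ ξ ∈ Ξ, ∃ θ : Fin T → ℝ, (∀ i, 0 ≤ θ i) ∧
        z = ((A.mulVec ξ ⬝ᵥ A.mulVec ξ + b ⬝ᵥ ξ + c -
          (1 / 4) * ((Wᵀ.mulVec θ - R.mulVec ξ - r) ⬝ᵥ
            (Pᵀ * P)⁻¹.mulVec (Wᵀ.mulVec θ - R.mulVec ξ - r)) +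
          (Tb.mulVec ξ + h) ⬝ᵥ θ : ℝ) : EReal)} := by
  obtain ⟨yp, hyp⟩ := hcr
  have hPtP : ∀ y : Fin n → ℝ, P.mulVec y ⬝ᵥ P.mulVec y = y ⬝ᵥ (Pᵀ * P).mulVec y := by
    intro y
    conv_rhs => rw [← mulVec_mulVec, dotProduct_mulVec, vecMul_transpose]
  apply le_antisymm
  · refine sSup_le ?_
    rintro z ⟨ξ, hξ, rfl⟩
    set d : Fin T → ℝ := Tb.mulVec ξ + h with hd
    set q : Fin n → ℝ := R.mulVec ξ + r with hq
    set Fr : Set ℝ :=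
      {x : ℝ | ∃ y : Fin n → ℝ, (∀ i, d i ≤ W.mulVec y i) ∧
        x = y ⬝ᵥ (Pᵀ * P) *ᵥ y + q ⬝ᵥ y} with hFr
    obtain ⟨ysl, hysl⟩ := my_slater W hyp d
    have hne : Fr.Nonempty := ⟨_, ysl, fun i => (hysl i).le, rfl⟩
    have hbd : BddBelow Fr := my_bdd hP W d q
    have hset : {w : EReal | ∃ y : Fin n → ℝ,
        (∀ i, d i ≤ W.mulVec y i) ∧
        w = ((P.mulVec y ⬝ᵥ P.mulVec y + q ⬝ᵥ y : ℝ) : EReal)}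
        = {w : EReal | ∃ x ∈ Fr, w = (x : ℝ)} := by
      ext w
      constructor
      · rintro ⟨y, hfe, rfl⟩
        exact ⟨_, ⟨y, hfe, rfl⟩, by rw [hPtP]⟩
      · rintro ⟨x, ⟨y, hfe, rfl⟩, rfl⟩
        exact ⟨y, hfe, by rw [hPtP]⟩
    rw [hset, my_ereal_sInf hne hbd]
    obtain ⟨θ, hθ, hstr⟩ := my_strong hP W d q hysl
    have hweak : -(4⁻¹ : ℝ) * ((Wᵀ *ᵥ θ - q) ⬝ᵥ (Pᵀ * P)⁻¹ *ᵥ (Wᵀ *ᵥ θ - q)) + d ⬝ᵥ θ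
        ≤ sInf Fr := by
      refine le_csInf hne ?_
      rintro x ⟨y, hfe, rfl⟩
      exact my_weak hP W d q hθ hfe
    have heq : sInf Fr
        = -(4⁻¹ : ℝ) * ((Wᵀ *ᵥ θ - q) ⬝ᵥ (Pᵀ * P)⁻¹ *ᵥ (Wᵀ *ᵥ θ - q)) + d ⬝ᵥ θ :=
      le_antisymm hstr hweak
    refine le_sSup ⟨ξ, hξ, θ, hθ, ?_⟩
    rw [← EReal.coe_add]
    congr 1
    rw [heq, sub_sub, ← hq]
    ring
  · refine sSup_le ?_
    rintro z ⟨ξ, hξ, θ, hθ, rfl⟩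
    set d : Fin T → ℝ := Tb.mulVec ξ + h with hd
    set q : Fin n → ℝ := R.mulVec ξ + r with hq
    set Fr : Set ℝ :=
      {x : ℝ | ∃ y : Fin n → ℝ, (∀ i, d i ≤ W.mulVec y i) ∧
        x = y ⬝ᵥ (Pᵀ * P) *ᵥ y + q ⬝ᵥ y} with hFr
    obtain ⟨ysl, hysl⟩ := my_slater W hyp d
    have hne : Fr.Nonempty := ⟨_, ysl, fun i => (hysl i).le, rfl⟩
    have hbd : BddBelow Fr := my_bdd hP W d q
    have hset : {w : EReal | ∃ y : Fin n → ℝ,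
        (∀ i, d i ≤ W.mulVec y i) ∧
        w = ((P.mulVec y ⬝ᵥ P.mulVec y + q ⬝ᵥ y : ℝ) : EReal)}
        = {w : EReal | ∃ x ∈ Fr, w = (x : ℝ)} := by
      ext w
      constructor
      · rintro ⟨y, hfe, rfl⟩
        exact ⟨_, ⟨y, hfe, rfl⟩, by rw [hPtP]⟩
      · rintro ⟨x, ⟨y, hfe, rfl⟩, rfl⟩
        exact ⟨y, hfe, by rw [hPtP]⟩
    have hweak : -(4⁻¹ : ℝ) * ((Wᵀ *ᵥ θ - q) ⬝ᵥ (Pᵀ * P)⁻¹ *ᵥ (Wᵀ *ᵥ θ - q)) + d ⬝ᵥ θ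
        ≤ sInf Fr := by
      refine le_csInf hne ?_
      rintro x ⟨y, hfe, rfl⟩
      exact my_weak hP W d q hθ hfe
    refine le_trans ?_ (le_sSup ⟨ξ, hξ, rfl⟩)
    rw [hset, my_ereal_sInf hne hbd, ← EReal.coe_add, EReal.coe_le_coe_iff]
    rw [sub_sub, ← hq]
    linarith
end
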